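/- arXiv:2605.27279 — 2 statements merged into one kernel-verified Lean document; each statement's English description precedes it below -/
import Mathlib

section
/- Let R = {R_i, t_i}_{i≥0} be a preperfectoid tower arising from a pair (R, I_0). Fix i ≥ 0 and suppose R_i and R_{i+1} are I_0-adically separated, i.e., ∩_{n≥0} I_0^n R_i = 0 and ∩_{n≥0} I_0^n R_{i+1} = 0. Then the ring R_i is reduced. -/
open Submodule

section Preamble

variable {A : Type*} [CommRing A]

/-- The submodule of `I`-torsion elements: elements killed by a power of each element of `I`. -/
def Itor (I : Ideal A) (M : Type*) [AddCommGroup M] [Module A M] : Submodule A M where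
  carrier := {x | ∀ a ∈ I, ∃ n : ℕ, a ^ n • x = 0}
  zero_mem' := fun a _ => ⟨1, smul_zero _⟩
  add_mem' := by
    rintro x y hx hy a ha
    obtain ⟨n, hn⟩ := hx a ha
    obtain ⟨m, hm⟩ := hy a ha
    refine ⟨n + m, ?_⟩
    have h1 : a ^ (n + m) • x = 0 := by
      rw [pow_add, mul_comm, mul_smul, hn, smul_zero]
    have h2 : a ^ (n + m) • y = 0 := by
      rw [pow_add, mul_smul, hm, smul_zero]
    rw [smul_add, h1, h2, add_zero]
  smul_mem' := by
    rintro c x hx a ha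
    obtain ⟨n, hn⟩ := hx a ha
    exact ⟨n, by rw [smul_comm, hn, smul_zero]⟩

lemma mem_pow_zero (I : Ideal A) (x : A) : x ∈ I ^ 0 := by
  simp [Ideal.one_eq_top]

lemma mul_mem_pow_add {I : Ideal A} {m n : ℕ} {x y : A}
    (hx : x ∈ I ^ m) (hy : y ∈ I ^ n) : x * y ∈ I ^ (m + n) := by
  rw [pow_add]; exact Ideal.mul_mem_mul hx hy

/-- The `n`-th graded piece `Iⁿ/Iⁿ⁺¹` of the conormal cone of `(A, I)`. -/
abbrev GrPiece (I : Ideal A) (n : ℕ) :=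
  (I ^ n : Ideal A) ⧸ (Submodule.comap (I ^ n : Ideal A).subtype (I ^ (n + 1) : Ideal A))

/-- Class of an element of `Iⁿ` in the graded piece `Iⁿ/Iⁿ⁺¹`. -/
def grMk (I : Ideal A) (n : ℕ) (x : A) (hx : x ∈ I ^ n) : GrPiece I n :=
  Submodule.Quotient.mk ⟨x, hx⟩

lemma grMk_eq_iff (I : Ideal A) (n : ℕ) {x y : A} (hx : x ∈ I ^ n) (hy : y ∈ I ^ n) :
    grMk I n x hx = grMk I n y hy ↔ x - y ∈ I ^ (n + 1) := by
  rw [grMk, grMk, Submodule.Quotient.eq]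
  rfl

/-- The map on graded pieces induced by a ring homomorphism `f` with `f(Iⁿ) ⊆ Jⁿ`. -/
def grMap {B : Type*} [CommRing B] (f : A →+* B) (I : Ideal A) (J : Ideal B)
    (hf : ∀ n, ∀ x ∈ I ^ n, f x ∈ J ^ n) (n : ℕ) :
    GrPiece I n → GrPiece J n := by
  refine Quotient.lift (fun x => grMk J n (f x.1) (hf n x.1 x.2)) ?_
  intro x y hxy
  rw [grMk_eq_iff]
  have hxy0 : x - y ∈ Submodule.comap (I ^ n : Ideal A).subtype (I ^ (n + 1) : Ideal A) :=
    Submodule.quotientRel_def _ |>.mp hxy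
  have hxy' : (x : A) - (y : A) ∈ I ^ (n + 1) := hxy0
  have := hf (n + 1) _ hxy'
  rwa [map_sub] at this

@[simp] lemma grMap_mk {B : Type*} [CommRing B] (f : A →+* B) (I : Ideal A) (J : Ideal B)
    (hf : ∀ n, ∀ x ∈ I ^ n, f x ∈ J ^ n) (n : ℕ) (x : A) (hx : x ∈ I ^ n) :
    grMap f I J hf n (grMk I n x hx) = grMk J n (f x) (hf n x hx) := rfl


lemma gen_mem {I : Ideal A} {a : A} (h : I = Ideal.span {a}) : a ∈ I := by
  rw [h]; exact Ideal.mem_span_singleton_self a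

lemma gen_mem_pow_one {I : Ideal A} {a : A} (h : I = Ideal.span {a}) : a ∈ I ^ 1 := by
  rw [pow_one]; exact gen_mem h

lemma mem_pow_one {I : Ideal A} {a : A} (ha : a ∈ I) : a ∈ I ^ 1 := by
  rwa [pow_one]

lemma mul_mem_Itor {I : Ideal A} {x y : A} (hy : y ∈ Itor I A) :
    x * y ∈ Itor I A := by
  simpa using (Itor I A).smul_mem x hy

/-- Multiplicativity of a family of maps between graded pieces: `g` respects the
multiplication of the conormal cones. -/
def GradedMul {A : Type*} [CommRing A] {B : Type*} [CommRing B] (I : Ideal A) (J : Ideal B)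
    (g : ∀ n, GrPiece I n →+ GrPiece J n) : Prop :=
  ∀ (m n : ℕ) (x y : A) (hx : x ∈ I ^ m) (hy : y ∈ I ^ n) (u v : B) (hu : u ∈ J ^ m)
    (hv : v ∈ J ^ n),
    g m (grMk I m x hx) = grMk J m u hu →
    g n (grMk I n y hy) = grMk J n v hv →
    g (m + n) (grMk I (m + n) (x * y) (mul_mem_pow_add hx hy)) =
      grMk J (m + n) (u * v) (mul_mem_pow_add hu hv)

section Tower

universe u

variable (R : ℕ → Type u) [∀ i, CommRing (R i)] (t : ∀ i, R i →+* R (i + 1))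

/-- The composite transition map `R 0 → R i` of a tower. -/
def chain : ∀ i, R 0 →+* R i
  | 0 => RingHom.id (R 0)
  | (i + 1) => (t i).comp (chain i)

/-- The composite transition map `R 1 → R (i+1)` of a tower. -/
def chain1 : ∀ i, R 1 →+* R (i + 1)
  | 0 => RingHom.id (R 1)
  | (i + 1) => (t (i + 1)).comp (chain1 i)

variable (I0 : Ideal (R 0))

/-- The extension `I₀Rᵢ` of `I₀` to the `i`-th layer. -/
def I0R (i : ℕ) : Ideal (R i) := I0.map (chain R t i)

lemma I0R_succ (i : ℕ) : I0R R t I0 (i + 1) = (I0R R t I0 i).map (t i) := by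
  rw [I0R, I0R, Ideal.map_map]; rfl

/-- The induced map `t̄ᵢ : Rᵢ/I₀Rᵢ → Rᵢ₊₁/I₀Rᵢ₊₁`. -/
def tbar (i : ℕ) : R i ⧸ I0R R t I0 i →+* R (i + 1) ⧸ I0R R t I0 (i + 1) :=
  Ideal.quotientMap _ (t i) (by rw [I0R_succ]; exact Ideal.le_comap_map)

lemma t_pow_mem (i : ℕ) : ∀ n, ∀ x ∈ (I0R R t I0 i) ^ n, t i x ∈ (I0R R t I0 (i + 1)) ^ n := by
  intro n x hx
  have : t i x ∈ Ideal.map (t i) ((I0R R t I0 i) ^ n) := Ideal.mem_map_of_mem _ hx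
  rwa [Ideal.map_pow, ← I0R_succ] at this

/-- The extension `I₁Rᵢ₊₁` of a principal ideal `I₁ ⊆ R₁`. -/
def I1R (I1 : Ideal (R 1)) (i : ℕ) : Ideal (R (i + 1)) := I1.map (chain1 R t i)

variable (p : ℕ)

/-- The torsion-part conditions (g) of a (pre)perfectoid tower, for the `i`-th layer:
`I₀·(Rᵢ)_{I₀-tor} = 0` and existence of a bijection `(Fᵢ)_tor` compatible with `Fᵢ`. -/
def CondG (F : ∀ i, R (i + 1) ⧸ I0R R t I0 (i + 1) →+* R i ⧸ I0R R t I0 i) (i : ℕ) : Prop :=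
  (∀ a ∈ I0R R t I0 i, ∀ x ∈ Itor (I0R R t I0 i) (R i), a * x = 0) ∧
  ∃ Ftor : Itor (I0R R t I0 (i + 1)) (R (i + 1)) → Itor (I0R R t I0 i) (R i),
    Function.Bijective Ftor ∧
    ∀ x, Ideal.Quotient.mk (I0R R t I0 i) (Ftor x).1 =
      F i (Ideal.Quotient.mk (I0R R t I0 (i + 1)) x.1)

/-- The conormal-cone conditions (g') of Theorem 3.8, for the `i`-th layer:
`I₀·(Rᵢ)_{I₀-tor} = 0` and existence of a graded ring isomorphism
`Φᵢ : gr_{I₁}(Rᵢ₊₁) → gr_{I₀}(Rᵢ)` whose degree-0 component, composed with the projection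
`Rᵢ₊₁/I₀Rᵢ₊₁ → Rᵢ₊₁/I₁Rᵢ₊₁`, is `Fᵢ`. -/
def CondG' (F : ∀ i, R (i + 1) ⧸ I0R R t I0 (i + 1) →+* R i ⧸ I0R R t I0 i)
    (I1 : Ideal (R 1)) (i : ℕ) : Prop :=
  (∀ a ∈ I0R R t I0 i, ∀ x ∈ Itor (I0R R t I0 i) (R i), a * x = 0) ∧
  ∃ g : ∀ n, GrPiece (I1R R t I1 i) n →+ GrPiece (I0R R t I0 i) n,
    (∀ n, Function.Bijective (g n)) ∧
    GradedMul (I1R R t I1 i) (I0R R t I0 i) g ∧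
    ∀ (x : R (i + 1)) (u : R i),
      Ideal.Quotient.mk (I0R R t I0 i) u = F i (Ideal.Quotient.mk (I0R R t I0 (i + 1)) x) →
      g 0 (grMk (I1R R t I1 i) 0 x (mem_pow_zero _ x)) =
        grMk (I0R R t I0 i) 0 u (mem_pow_zero _ u)

/-- `R` together with the transition maps `t` is a preperfectoid tower arising from
`(R 0, I0)` (Definition 3.1: conditions (a)–(d), (f), (g)). -/
def IsPreperfectoidTower : Prop :=
  (p : R 0) ∈ I0 ∧
  (∀ i, Function.Injective (tbar R t I0 i)) ∧
  I0.IsPrincipal ∧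
  ∃ F : ∀ i, R (i + 1) ⧸ I0R R t I0 (i + 1) →+* R i ⧸ I0R R t I0 i,
    (∀ i x, tbar R t I0 i (F i x) = x ^ p) ∧
    (∀ i, Function.Surjective (F i)) ∧
    (∃ I1 : Ideal (R 1), I1.IsPrincipal ∧ I1 ^ p = I0R R t I0 1 ∧
      ∀ i, RingHom.ker (F i) =
        I1.map ((Ideal.Quotient.mk (I0R R t I0 (i + 1))).comp (chain1 R t i))) ∧
    (∀ i, CondG R t I0 F i)

end Tower
universe u
section PTAux

variable {S : Type*} [CommRing S]

/-- If `f^n * x = 0` then `x` is `span {f}`-torsion. -/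
lemma PT_itor_of_pow_ann {I : Ideal S} {f : S} (hI : I = Ideal.span {f}) {x : S} {n : ℕ}
    (hx : f ^ n * x = 0) : x ∈ Itor I S := by
  intro a ha
  rw [hI, Ideal.mem_span_singleton'] at ha
  obtain ⟨c, rfl⟩ := ha
  refine ⟨n, ?_⟩
  rw [smul_eq_mul, mul_pow, mul_assoc, hx, mul_zero]

lemma PT_tor_kill {I : Ideal S} {f : S} (hI : I = Ideal.span {f})
    (hkill : ∀ a ∈ I, ∀ x ∈ Itor I S, a * x = 0) {x : S} (hx : x ∈ Itor I S) :
    f * x = 0 := hkill f (gen_mem hI) x hx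

/-- Torsion ∩ ideal = 0. -/
lemma PT_tor_inter {I : Ideal S} {f : S} (hI : I = Ideal.span {f})
    (hkill : ∀ a ∈ I, ∀ x ∈ Itor I S, a * x = 0) {x : S} (hx : x ∈ Itor I S)
    (hx' : x ∈ I) : x = 0 := by
  rw [hI, Ideal.mem_span_singleton'] at hx'
  obtain ⟨c, hc⟩ := hx'
  have h1 : f * x = 0 := PT_tor_kill hI hkill hx
  have h2 : f ^ 2 * c = 0 := by
    have : f * (c * f) = 0 := by rw [hc]; exact h1
    calc f ^ 2 * c = f * (c * f) := by ring
    _ = 0 := this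
  have hc_tor : c ∈ Itor I S := PT_itor_of_pow_ann hI h2
  have h3 : f * c = 0 := PT_tor_kill hI hkill hc_tor
  rw [← hc, mul_comm c f, h3]

lemma PT_pow_tor {I : Ideal S} {x : S} (hx : x ∈ Itor I S) {k : ℕ} (hk : k ≠ 0) :
    x ^ k ∈ Itor I S := by
  obtain ⟨m, rfl⟩ := Nat.exists_eq_succ_of_ne_zero hk
  rw [pow_succ]
  exact mul_mem_Itor hx

lemma PT_tor_mk_inj {I : Ideal S} {f : S} (hI : I = Ideal.span {f})
    (hkill : ∀ a ∈ I, ∀ x ∈ Itor I S, a * x = 0) {x y : S} (hx : x ∈ Itor I S)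
    (hy : y ∈ Itor I S) (h : Ideal.Quotient.mk I x = Ideal.Quotient.mk I y) : x = y := by
  have hsub : x - y ∈ I := Ideal.Quotient.eq.mp h
  have : x - y = 0 := PT_tor_inter hI hkill (Submodule.sub_mem _ hx hy) hsub
  exact sub_eq_zero.mp this
  

/-- Freshman's dream against a torsion element: if `θ` is torsion and `(p:S) ∈ I`,
then `(a + θ)^p = a^p + θ^p`. -/
lemma PT_fresh {I : Ideal S} {p : ℕ} (hp : p.Prime)
    (hkill : ∀ a ∈ I, ∀ x ∈ Itor I S, a * x = 0) (hpI : (p : S) ∈ I)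
    (a : S) {θ : S} (hθ : θ ∈ Itor I S) : (a + θ) ^ p = a ^ p + θ ^ p := by
  rw [add_pow_prime_eq hp]
  have hz : (p : S) * a * θ * ∑ k ∈ Finset.Ioo 0 p, a ^ (k - 1) * θ ^ (p - k - 1) * ((p.choose k / p : ℕ) : S) = 0 := by
    have e : (p : S) * a * θ * ∑ k ∈ Finset.Ioo 0 p, a ^ (k - 1) * θ ^ (p - k - 1) * ((p.choose k / p : ℕ) : S)
        = (p : S) * ((a * ∑ k ∈ Finset.Ioo 0 p, a ^ (k - 1) * θ ^ (p - k - 1) * ((p.choose k / p : ℕ) : S)) * θ) := by ring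
    rw [e]
    exact hkill _ hpI _ (mul_mem_Itor hθ)
  rw [hz, add_zero]

end PTAux
section PTPair

variable {S S' : Type*} [CommRing S] [CommRing S'] {p : ℕ}
variable {tt : S →+* S'} {I : Ideal S} {I' : Ideal S'} {f : S} {f' : S'} {b' : S'}
variable {tb : S ⧸ I →+* S' ⧸ I'} {FF : S' ⧸ I' →+* S ⧸ I}
variable {Ft : Itor I S → Itor I' S'}  -- dummy to be removed

/-- Transition maps preserve torsion. -/
lemma PT_t_tor (hI : I = Ideal.span {f}) (hI' : I' = Ideal.span {f'}) (htf : tt f = f')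
    (hkill : ∀ a ∈ I, ∀ x ∈ Itor I S, a * x = 0) {x : S} (hx : x ∈ Itor I S) :
    tt x ∈ Itor I' S' := by
  have h1 : f' ^ 1 * tt x = 0 := by
    rw [pow_one, ← htf, ← map_mul, PT_tor_kill hI hkill hx, map_zero]
  exact PT_itor_of_pow_ann hI' h1

end PTPair

section PTPair2

variable {S S' : Type*} [CommRing S] [CommRing S'] {p : ℕ}
variable {tt : S →+* S'} {I : Ideal S} {I' : Ideal S'} {f : S} {f' : S'} {b' : S'}
variable {tb : S ⧸ I →+* S' ⧸ I'} {FF : S' ⧸ I' →+* S ⧸ I}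
variable {Ft : Itor I' S' → Itor I S}

/-- The value of `Ftor` at `0` is `0`. -/
lemma PT_Ft_zero (hI : I = Ideal.span {f})
    (hkill : ∀ a ∈ I, ∀ x ∈ Itor I S, a * x = 0)
    (hFt : ∀ z : Itor I' S', Ideal.Quotient.mk I (Ft z).1 = FF (Ideal.Quotient.mk I' z.1)) :
    (Ft 0).1 = 0 := by
  have h0 : Ideal.Quotient.mk I (Ft 0).1 = 0 := by
    rw [hFt 0]
    have : ((0 : Itor I' S') : S') = 0 := rfl
    rw [this, map_zero, map_zero]
  exact PT_tor_inter hI hkill (Ft 0).2 (Ideal.Quotient.eq_zero_iff_mem.mp h0)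

/-- Cancellation: if the value of `Ftor z` is zero then `z = 0`. -/
lemma PT_Ft_cancel (hI : I = Ideal.span {f})
    (hkill : ∀ a ∈ I, ∀ x ∈ Itor I S, a * x = 0)
    (hFt_bij : Function.Bijective Ft)
    (hFt : ∀ z : Itor I' S', Ideal.Quotient.mk I (Ft z).1 = FF (Ideal.Quotient.mk I' z.1))
    {z : Itor I' S'} (hz : (Ft z).1 = 0) : z.1 = 0 := by
  have h1 : Ft z = Ft 0 := Subtype.ext (by rw [hz, PT_Ft_zero hI hkill hFt])
  have h2 : z = 0 := hFt_bij.1 h1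
  rw [h2]; rfl

/-- Key formula: `t (Ftor z) = z ^ p`. -/
lemma PT_tFt (hp : p.Prime) (hI : I = Ideal.span {f}) (hI' : I' = Ideal.span {f'})
    (htf : tt f = f')
    (hkill : ∀ a ∈ I, ∀ x ∈ Itor I S, a * x = 0)
    (hkill' : ∀ a ∈ I', ∀ x ∈ Itor I' S', a * x = 0)
    (htb : ∀ x, tb (Ideal.Quotient.mk I x) = Ideal.Quotient.mk I' (tt x))
    (hFF : ∀ x, tb (FF x) = x ^ p)
    (hFt : ∀ z : Itor I' S', Ideal.Quotient.mk I (Ft z).1 = FF (Ideal.Quotient.mk I' z.1))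
    (z : Itor I' S') : tt (Ft z).1 = z.1 ^ p := by
  have h1 : Ideal.Quotient.mk I' (tt (Ft z).1) = Ideal.Quotient.mk I' (z.1 ^ p) := by
    rw [← htb, hFt, hFF, map_pow]
  exact PT_tor_mk_inj hI' hkill'
    (PT_t_tor hI hI' htf hkill (Ft z).2) (PT_pow_tor z.2 hp.pos.ne') h1

/-- THE KEY FACT: the `I₁`-generator kills torsion. -/
lemma PT_bkill (hI : I = Ideal.span {f})
    (hkill : ∀ a ∈ I, ∀ x ∈ Itor I S, a * x = 0)
    (hFt_bij : Function.Bijective Ft)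
    (hFt : ∀ z : Itor I' S', Ideal.Quotient.mk I (Ft z).1 = FF (Ideal.Quotient.mk I' z.1))
    (hker : RingHom.ker FF = Ideal.span {Ideal.Quotient.mk I' b'})
    {θ : S'} (hθ : θ ∈ Itor I' S') : b' * θ = 0 := by
  set ξ : Itor I' S' := ⟨b' * θ, mul_mem_Itor hθ⟩ with hξ
  have h1 : Ideal.Quotient.mk I (Ft ξ).1 = 0 := by
    rw [hFt ξ]
    have h2 : (ξ : S') = b' * θ := rfl
    rw [h2, map_mul]
    have h3 : FF (Ideal.Quotient.mk I' b') = 0 := by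
      rw [← RingHom.mem_ker, hker]
      exact Ideal.mem_span_singleton_self _
    rw [map_mul, h3, zero_mul]
  have h4 : (Ft ξ).1 = 0 :=
    PT_tor_inter hI hkill (Ft ξ).2 (Ideal.Quotient.eq_zero_iff_mem.mp h1)
  exact PT_Ft_cancel hI hkill hFt_bij hFt h4

/-- Elements killed by a power of `b'` are torsion. -/
lemma PT_ann_b (hp : p.Prime) (hI' : I' = Ideal.span {f'})
    (hb'p : Ideal.span {b'} ^ p = I') {x : S'} {k : ℕ} (_hk : k ≠ 0)
    (hx : b' ^ k * x = 0) : x ∈ Itor I' S' := by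
  have hf' : f' ∈ Ideal.span {b' ^ p} := by
    rw [← Ideal.span_singleton_pow, hb'p]; exact gen_mem hI'
  rw [Ideal.mem_span_singleton'] at hf'
  obtain ⟨c, hc⟩ := hf'
  have hkle : k ≤ p * k := Nat.le_mul_of_pos_left k hp.pos
  have h1 : f' ^ k * x = 0 := by
    rw [← hc, mul_pow, ← pow_mul]
    have h2 : b' ^ (p * k) = b' ^ (p * k - k) * b' ^ k := by
      rw [← pow_add, Nat.sub_add_cancel hkle]
    rw [h2]
    calc c ^ k * (b' ^ (p * k - k) * b' ^ k) * x
        = c ^ k * b' ^ (p * k - k) * (b' ^ k * x) := by ring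
      _ = 0 := by rw [hx, mul_zero]
  exact PT_itor_of_pow_ann hI' h1

/-- L1: an element whose `p`-th power lies in `I'` is divisible by `b'`. -/
lemma PT_L1 (hp : p.Prime) (hb'p : Ideal.span {b'} ^ p = I')
    (htb_inj : Function.Injective tb)
    (hFF : ∀ x, tb (FF x) = x ^ p)
    (hker : RingHom.ker FF = Ideal.span {Ideal.Quotient.mk I' b'})
    {y : S'} (hy : y ^ p ∈ I') : ∃ s, y = b' * s := by
  have h0 : tb (FF (Ideal.Quotient.mk I' y)) = tb 0 := by
    rw [hFF, ← map_pow, Ideal.Quotient.eq_zero_iff_mem.mpr hy, map_zero]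
  have h1 : FF (Ideal.Quotient.mk I' y) = 0 := htb_inj h0
  have h2 : Ideal.Quotient.mk I' y ∈ RingHom.ker FF := RingHom.mem_ker.mpr h1
  rw [hker, Ideal.mem_span_singleton'] at h2
  obtain ⟨cb, hcb⟩ := h2
  obtain ⟨c, rfl⟩ := Ideal.Quotient.mk_surjective cb
  have h3 : Ideal.Quotient.mk I' (c * b') = Ideal.Quotient.mk I' y := by
    rw [map_mul]; exact hcb
  have h4 : y - c * b' ∈ I' := Ideal.Quotient.eq.mp h3.symm
  have hI'2 : I' = Ideal.span {b' ^ p} := by rw [← hb'p, Ideal.span_singleton_pow]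
  rw [hI'2, Ideal.mem_span_singleton'] at h4
  obtain ⟨d, hd⟩ := h4
  have hps : b' ^ p = b' ^ (p - 1) * b' := by
    conv_lhs => rw [← Nat.succ_pred_eq_of_pos hp.pos, pow_succ]
    rfl
  refine ⟨c + d * b' ^ (p - 1), ?_⟩
  have h5 : y = c * b' + d * b' ^ p := by linear_combination -hd
  rw [h5, hps]; ring

end PTPair2
section PTTriple

variable {S S' S'' : Type*} [CommRing S] [CommRing S'] [CommRing S''] {p : ℕ}
variable {tt : S →+* S'} {tt' : S' →+* S''}
variable {I : Ideal S} {I' : Ideal S'} {I'' : Ideal S''}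
variable {f : S} {f' : S'} {f'' : S''} {b' : S'} {b'' : S''}
variable {tb : S ⧸ I →+* S' ⧸ I'} {tb' : S' ⧸ I' →+* S'' ⧸ I''}
variable {FF : S' ⧸ I' →+* S ⧸ I} {FF' : S'' ⧸ I'' →+* S' ⧸ I'}
variable {Ft : Itor I' S' → Itor I S} {Ft' : Itor I'' S'' → Itor I' S'}

/-- **The breach**: an element of the middle ring whose `p`-th power is
torsion + `I'` is divisible by `b'` modulo torsion. -/
lemma PT_breach (hp : p.Prime)
    -- upper pair data
    (hI' : I' = Ideal.span {f'}) (hI'' : I'' = Ideal.span {f''}) (htf' : tt' f' = f'')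
    (kill' : ∀ a ∈ I', ∀ x ∈ Itor I' S', a * x = 0)
    (kill'' : ∀ a ∈ I'', ∀ x ∈ Itor I'' S'', a * x = 0)
    (hpI'' : (p : S'') ∈ I'')
    (htb' : ∀ x, tb' (Ideal.Quotient.mk I' x) = Ideal.Quotient.mk I'' (tt' x))
    (htb'_inj : Function.Injective tb')
    (hFF' : ∀ x, tb' (FF' x) = x ^ p)
    (hker' : RingHom.ker FF' = Ideal.span {Ideal.Quotient.mk I'' b''})
    (hb''p : Ideal.span {b''} ^ p = I'')
    (hFt'_bij : Function.Bijective Ft')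
    (hFt' : ∀ z : Itor I'' S'', Ideal.Quotient.mk I' (Ft' z).1 = FF' (Ideal.Quotient.mk I'' z.1))
    -- lower-pair data about b'
    (hb'p : Ideal.span {b'} ^ p = I')
    (hlink : tt' b' = b'')
    {w θ₀ r : S'} (hθ₀ : θ₀ ∈ Itor I' S') (hw : w ^ p = θ₀ + f' * r) :
    ∃ s θ, θ ∈ Itor I' S' ∧ w = b' * s + θ := by
  obtain ⟨κ, hκ⟩ := hFt'_bij.2 ⟨θ₀, hθ₀⟩
  have htθ : tt' θ₀ = κ.1 ^ p := by
    have h := PT_tFt hp hI' hI'' htf' kill' kill'' htb' hFF' hFt' κ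
    rw [hκ] at h
    exact h
  have hνκ : tt' w = (tt' w - κ.1) + κ.1 := by ring
  have h5 : (tt' w) ^ p = (tt' w - κ.1) ^ p + κ.1 ^ p := by
    conv_lhs => rw [hνκ]
    exact PT_fresh hp kill'' hpI'' _ κ.2
  have h6 : (tt' w) ^ p = κ.1 ^ p + f'' * tt' r := by
    rw [← map_pow, hw, map_add, map_mul, htθ, htf']
  have h7 : (tt' w - κ.1) ^ p = f'' * tt' r := by linear_combination h5.symm + h6
  have h8 : (tt' w - κ.1) ^ p ∈ I'' := by
    rw [h7]
    exact Ideal.mul_mem_right _ _ (gen_mem hI'')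
  obtain ⟨m, hm⟩ := PT_L1 hp hb''p htb'_inj hFF' hker' h8
  -- the key multiplication
  have hps1 : p - 1 ≠ 0 := Nat.sub_ne_zero_of_lt hp.one_lt
  obtain ⟨k, hk⟩ := Nat.exists_eq_succ_of_ne_zero hps1
  have hbk : b'' ^ (p - 1) * κ.1 = 0 := by
    rw [hk, pow_succ, mul_assoc]
    rw [PT_bkill hI' kill' hFt'_bij hFt' hker' κ.2, mul_zero]
  have hppow : b'' ^ (p - 1) * b'' = b'' ^ p := by
    rw [← pow_succ, ← Nat.succ_pred_eq_of_pos hp.pos]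
    rfl
  have h10 : tt' (b' ^ (p - 1) * w) ∈ I'' := by
    have hbp_mem : b'' ^ p ∈ I'' := by
      rw [← hb''p, Ideal.span_singleton_pow]
      exact Ideal.mem_span_singleton_self _
    have e : tt' (b' ^ (p - 1) * w) = b'' ^ p * m := by
      rw [map_mul, map_pow, hlink]
      conv_lhs => rw [hνκ]
      rw [hm, mul_add, hbk, add_zero, ← mul_assoc, hppow]
    rw [e]
    exact Ideal.mul_mem_right _ _ hbp_mem
  have h11 : tb' (Ideal.Quotient.mk I' (b' ^ (p - 1) * w)) = tb' 0 := by
    rw [htb', Ideal.Quotient.eq_zero_iff_mem.mpr h10, map_zero]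
  have h12 : Ideal.Quotient.mk I' (b' ^ (p - 1) * w) = 0 := htb'_inj h11
  have h13 : b' ^ (p - 1) * w ∈ Ideal.span {b' ^ p} := by
    rw [← Ideal.span_singleton_pow, hb'p]
    exact Ideal.Quotient.eq_zero_iff_mem.mp h12
  rw [Ideal.mem_span_singleton'] at h13
  obtain ⟨c, hc⟩ := h13
  have hps : b' ^ (p - 1) * b' = b' ^ p := by
    rw [← pow_succ, ← Nat.succ_pred_eq_of_pos hp.pos]
    rfl
  have h14 : b' ^ (p - 1) * (w - b' * c) = 0 := by linear_combination -hc - c * hps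
  have h15 : w - b' * c ∈ Itor I' S' := PT_ann_b hp hI' hb'p hps1 h14
  exact ⟨c, w - b' * c, h15, by ring⟩

end PTTriple
section PTTriple2

variable {S S' S'' : Type*} [CommRing S] [CommRing S'] [CommRing S''] {p : ℕ}
variable {tt : S →+* S'} {tt' : S' →+* S''}
variable {I : Ideal S} {I' : Ideal S'} {I'' : Ideal S''}
variable {f : S} {f' : S'} {f'' : S''} {b' : S'} {b'' : S''}
variable {tb : S ⧸ I →+* S' ⧸ I'} {tb' : S' ⧸ I' →+* S'' ⧸ I''}
variable {FF : S' ⧸ I' →+* S ⧸ I} {FF' : S'' ⧸ I'' →+* S' ⧸ I'}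
variable {Ft : Itor I' S' → Itor I S} {Ft' : Itor I'' S'' → Itor I' S'}

/-- **Ultimate torsion lemma**: if `w^p` is torsion, then `w` is torsion
(uses `I'`-adic separatedness). -/
lemma PT_ultimate (hp : p.Prime)
    -- lower pair data (for b' killing torsion of S')
    (hI : I = Ideal.span {f})
    (kill : ∀ a ∈ I, ∀ x ∈ Itor I S, a * x = 0)
    (hFt_bij : Function.Bijective Ft)
    (hFt : ∀ z : Itor I' S', Ideal.Quotient.mk I (Ft z).1 = FF (Ideal.Quotient.mk I' z.1))
    (hker : RingHom.ker FF = Ideal.span {Ideal.Quotient.mk I' b'})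
    -- upper pair data
    (hI' : I' = Ideal.span {f'}) (hI'' : I'' = Ideal.span {f''}) (htf' : tt' f' = f'')
    (kill' : ∀ a ∈ I', ∀ x ∈ Itor I' S', a * x = 0)
    (kill'' : ∀ a ∈ I'', ∀ x ∈ Itor I'' S'', a * x = 0)
    (hpI' : (p : S') ∈ I') (hpI'' : (p : S'') ∈ I'')
    (htb' : ∀ x, tb' (Ideal.Quotient.mk I' x) = Ideal.Quotient.mk I'' (tt' x))
    (htb'_inj : Function.Injective tb')
    (hFF' : ∀ x, tb' (FF' x) = x ^ p)
    (hker' : RingHom.ker FF' = Ideal.span {Ideal.Quotient.mk I'' b''})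
    (hb''p : Ideal.span {b''} ^ p = I'')
    (hFt'_bij : Function.Bijective Ft')
    (hFt' : ∀ z : Itor I'' S'', Ideal.Quotient.mk I' (Ft' z).1 = FF' (Ideal.Quotient.mk I'' z.1))
    (hb'p : Ideal.span {b'} ^ p = I')
    (hlink : tt' b' = b'')
    (hsep' : (⨅ n : ℕ, I' ^ n) = ⊥)
    {w : S'} (hw : w ^ p ∈ Itor I' S') : w ∈ Itor I' S' := by
  have hbreach : ∀ w₀ θ₀ r : S', θ₀ ∈ Itor I' S' → w₀ ^ p = θ₀ + f' * r →
      ∃ s θ, θ ∈ Itor I' S' ∧ w₀ = b' * s + θ := fun w₀ θ₀ r hθ₀ hw₀ =>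
    PT_breach hp hI' hI'' htf' kill' kill'' hpI'' htb' htb'_inj hFF' hker' hb''p
      hFt'_bij hFt' hb'p hlink hθ₀ hw₀
  have hbk : ∀ θ ∈ Itor I' S', b' * θ = 0 := fun θ hθ =>
    PT_bkill hI kill hFt_bij hFt hker hθ
  obtain ⟨s₁, θ, hθ, h1⟩ := hbreach w (w ^ p) 0 hw (by ring)
  have key : ∀ k : ℕ, ∃ s, w = b' ^ (k + 1) * s + θ := by
    intro k
    induction k with
    | zero => exact ⟨s₁, by rw [pow_one]; exact h1⟩
    | succ n ih =>
      obtain ⟨s, hs⟩ := ih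
      have e1 : w ^ p = (b' ^ (n + 1) * s) ^ p + θ ^ p := by
        rw [hs]; exact PT_fresh hp kill' hpI' _ hθ
      have e2 : b' * (w ^ p - θ ^ p) = 0 :=
        hbk _ (Submodule.sub_mem _ hw (PT_pow_tor hθ hp.pos.ne'))
      have e0 : w ^ p - θ ^ p = b' ^ ((n + 1) * p) * s ^ p := by
        rw [e1, mul_pow, ← pow_mul]; ring
      have e3 : b' ^ ((n + 1) * p + 1) * s ^ p = 0 := by
        calc b' ^ ((n + 1) * p + 1) * s ^ p = b' * (b' ^ ((n + 1) * p) * s ^ p) := by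
              rw [pow_succ]; ring
          _ = b' * (w ^ p - θ ^ p) := by rw [← e0]
          _ = 0 := e2
      have e4 : s ^ p ∈ Itor I' S' := PT_ann_b hp hI' hb'p (Nat.succ_ne_zero _) e3
      obtain ⟨s', θ', hθ', hs'⟩ := hbreach s (s ^ p) 0 e4 (by ring)
      have e5 : b' ^ (n + 1) * θ' = 0 := by
        rw [pow_succ, mul_assoc, hbk θ' hθ', mul_zero]
      refine ⟨s', ?_⟩
      rw [hs, hs', pow_succ]
      linear_combination e5
  have hall : ∀ n : ℕ, w - θ ∈ I' ^ n := by
    intro n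
    cases n with
    | zero => exact mem_pow_zero _ _
    | succ m =>
      obtain ⟨s, hs⟩ := key (p * (m + 1) - 1)
      have hpm : p * (m + 1) - 1 + 1 = p * (m + 1) :=
        Nat.succ_pred_eq_of_pos (Nat.mul_pos hp.pos (Nat.succ_pos m))
      rw [hpm] at hs
      have e6 : w - θ = b' ^ (p * (m + 1)) * s := by linear_combination hs
      have e7 : b' ^ (p * (m + 1)) * s ∈ Ideal.span {b'} ^ (p * (m + 1)) := by
        rw [Ideal.span_singleton_pow, Ideal.mem_span_singleton']
        exact ⟨s, mul_comm _ _⟩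
      rw [pow_mul, hb'p] at e7
      rw [e6]
      exact e7
  have hmem : w - θ ∈ (⨅ n : ℕ, I' ^ n) := (Submodule.mem_iInf _).mpr hall
  rw [hsep'] at hmem
  have : w = θ := sub_eq_zero.mp (Submodule.mem_bot _ |>.mp hmem)
  rw [this]; exact hθ

/-- **Descent**: if `t v` is torsion modulo `I'` then `v` is torsion modulo `I`. -/
lemma PT_descend (hp : p.Prime)
    -- lower pair
    (hI : I = Ideal.span {f}) (hI' : I' = Ideal.span {f'})
    (htb : ∀ x, tb (Ideal.Quotient.mk I x) = Ideal.Quotient.mk I' (tt x))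
    (hFF : ∀ x, tb (FF x) = x ^ p)
    (hker : RingHom.ker FF = Ideal.span {Ideal.Quotient.mk I' b'})
    (hd : Function.Surjective FF)
    (hFt : ∀ z : Itor I' S', Ideal.Quotient.mk I (Ft z).1 = FF (Ideal.Quotient.mk I' z.1))
    -- upper pair (for the breach)
    (hI'' : I'' = Ideal.span {f''}) (htf' : tt' f' = f'')
    (kill' : ∀ a ∈ I', ∀ x ∈ Itor I' S', a * x = 0)
    (kill'' : ∀ a ∈ I'', ∀ x ∈ Itor I'' S'', a * x = 0)
    (hpI'' : (p : S'') ∈ I'')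
    (htb' : ∀ x, tb' (Ideal.Quotient.mk I' x) = Ideal.Quotient.mk I'' (tt' x))
    (htb'_inj : Function.Injective tb')
    (hFF' : ∀ x, tb' (FF' x) = x ^ p)
    (hker' : RingHom.ker FF' = Ideal.span {Ideal.Quotient.mk I'' b''})
    (hb''p : Ideal.span {b''} ^ p = I'')
    (hFt'_bij : Function.Bijective Ft')
    (hFt' : ∀ z : Itor I'' S'', Ideal.Quotient.mk I' (Ft' z).1 = FF' (Ideal.Quotient.mk I'' z.1))
    (hb'p : Ideal.span {b'} ^ p = I')
    (hlink : tt' b' = b'')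
    {v : S} {ζ₀ s : S'} (hζ : ζ₀ ∈ Itor I' S') (hv : tt v = ζ₀ + f' * s) :
    ∃ τ a, τ ∈ Itor I S ∧ v = τ + f * a := by
  obtain ⟨wb, hwb⟩ := hd (Ideal.Quotient.mk I v)
  obtain ⟨w, rfl⟩ := Ideal.Quotient.mk_surjective wb
  have h1 : Ideal.Quotient.mk I' (w ^ p) = Ideal.Quotient.mk I' ζ₀ := by
    rw [map_pow, ← hFF, hwb, htb, hv, map_add, map_mul,
      Ideal.Quotient.eq_zero_iff_mem.mpr (gen_mem hI'), zero_mul, add_zero]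
  have h2 : w ^ p - ζ₀ ∈ I' := Ideal.Quotient.eq.mp h1
  rw [hI', Ideal.mem_span_singleton'] at h2
  obtain ⟨r, hr⟩ := h2
  have hw : w ^ p = ζ₀ + f' * r := by linear_combination -hr
  obtain ⟨c, θ₁, hθ₁, hwc⟩ := PT_breach hp hI' hI'' htf' kill' kill'' hpI'' htb'
    htb'_inj hFF' hker' hb''p hFt'_bij hFt' hb'p hlink hζ hw
  have h3 : Ideal.Quotient.mk I v = Ideal.Quotient.mk I (Ft ⟨θ₁, hθ₁⟩).1 := by
    rw [hFt, ← hwb, hwc, map_add, map_mul]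
    have hb0 : FF (Ideal.Quotient.mk I' b') = 0 := by
      rw [← RingHom.mem_ker, hker]
      exact Ideal.mem_span_singleton_self _
    rw [map_add, map_mul, hb0, zero_mul, zero_add]
  obtain ⟨τ, hτtor, hτ⟩ : ∃ τ, τ ∈ Itor I S ∧ (Ft ⟨θ₁, hθ₁⟩).1 = τ :=
    ⟨(Ft ⟨θ₁, hθ₁⟩).1, (Ft ⟨θ₁, hθ₁⟩).2, rfl⟩
  rw [hτ] at h3
  have h4 : v - τ ∈ I := Ideal.Quotient.eq.mp h3
  obtain ⟨a, ha⟩ : ∃ a, a * f = v - τ := by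
    rw [← Ideal.mem_span_singleton', ← hI]
    exact h4
  exact ⟨τ, a, hτtor, by linear_combination -ha⟩

end PTTriple2
section PTCore

variable {S S' S'' : Type*} [CommRing S] [CommRing S'] [CommRing S''] {p : ℕ}
variable {tt : S →+* S'} {tt' : S' →+* S''}
variable {I : Ideal S} {I' : Ideal S'} {I'' : Ideal S''}
variable {f : S} {f' : S'} {f'' : S''} {b' : S'} {b'' : S''}
variable {tb : S ⧸ I →+* S' ⧸ I'} {tb' : S' ⧸ I' →+* S'' ⧸ I''}
variable {FF : S' ⧸ I' →+* S ⧸ I} {FF' : S'' ⧸ I'' →+* S' ⧸ I'}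
variable {Ft : Itor I' S' → Itor I S} {Ft' : Itor I'' S'' → Itor I' S'}

/-- **Core theorem**: in the bottom ring of the triple, `x^p = 0` implies `x = 0`. -/
lemma PT_core (hp : p.Prime)
    (hI : I = Ideal.span {f}) (hI' : I' = Ideal.span {f'}) (hI'' : I'' = Ideal.span {f''})
    (htf : tt f = f') (htf' : tt' f' = f'')
    (kill : ∀ a ∈ I, ∀ x ∈ Itor I S, a * x = 0)
    (kill' : ∀ a ∈ I', ∀ x ∈ Itor I' S', a * x = 0)
    (kill'' : ∀ a ∈ I'', ∀ x ∈ Itor I'' S'', a * x = 0)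
    (hpI : (p : S) ∈ I) (hpI' : (p : S') ∈ I') (hpI'' : (p : S'') ∈ I'')
    (htb : ∀ x, tb (Ideal.Quotient.mk I x) = Ideal.Quotient.mk I' (tt x))
    (htb' : ∀ x, tb' (Ideal.Quotient.mk I' x) = Ideal.Quotient.mk I'' (tt' x))
    (htb_inj : Function.Injective tb) (htb'_inj : Function.Injective tb')
    (hFF : ∀ x, tb (FF x) = x ^ p) (hFF' : ∀ x, tb' (FF' x) = x ^ p)
    (hker : RingHom.ker FF = Ideal.span {Ideal.Quotient.mk I' b'})
    (hker' : RingHom.ker FF' = Ideal.span {Ideal.Quotient.mk I'' b''})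
    (hd : Function.Surjective FF)
    (hb'p : Ideal.span {b'} ^ p = I') (hb''p : Ideal.span {b''} ^ p = I'')
    (hlink : tt' b' = b'')
    (hFt_bij : Function.Bijective Ft) (hFt'_bij : Function.Bijective Ft')
    (hFt : ∀ z : Itor I' S', Ideal.Quotient.mk I (Ft z).1 = FF (Ideal.Quotient.mk I' z.1))
    (hFt' : ∀ z : Itor I'' S'', Ideal.Quotient.mk I' (Ft' z).1 = FF' (Ideal.Quotient.mk I'' z.1))
    (hsep : (⨅ n : ℕ, I ^ n) = ⊥) (hsep' : (⨅ n : ℕ, I' ^ n) = ⊥) :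
    ∀ x : S, x ^ p = 0 → x = 0 := by
  intro x hx
  -- claim 1: elements whose p-th power is torsion are torsion modulo (f)
  have claim1 : ∀ u : S, u ^ p ∈ Itor I S → ∃ τ a, τ ∈ Itor I S ∧ u = τ + f * a := by
    intro u hu
    obtain ⟨ζ, hζ⟩ := hFt_bij.2 ⟨u ^ p, hu⟩
    have hζp : tt (u ^ p) = ζ.1 ^ p := by
      have h := PT_tFt hp hI hI' htf kill kill' htb hFF hFt ζ
      rw [hζ] at h
      exact h
    have hνe : tt u = (tt u - ζ.1) + ζ.1 := by ring
    have h5 : (tt u) ^ p = (tt u - ζ.1) ^ p + ζ.1 ^ p := by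
      conv_lhs => rw [hνe]
      exact PT_fresh hp kill' hpI' _ ζ.2
    have h6 : (tt u - ζ.1) ^ p = 0 := by
      rw [← map_pow, hζp] at h5
      linear_combination -h5
    have h7 : (tt u - ζ.1) ^ p ∈ Itor I' S' := by
      rw [h6]; exact Submodule.zero_mem _
    have h8 : tt u - ζ.1 ∈ Itor I' S' :=
      PT_ultimate hp hI kill hFt_bij hFt hker hI' hI'' htf' kill' kill'' hpI' hpI''
        htb' htb'_inj hFF' hker' hb''p hFt'_bij hFt' hb'p hlink hsep' h7
    have h9 : tt u = (ζ.1 + (tt u - ζ.1)) + f' * 0 := by ring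
    exact PT_descend hp hI hI' htb hFF hker hd hFt hI'' htf' kill' kill'' hpI''
      htb' htb'_inj hFF' hker' hb''p hFt'_bij hFt' hb'p hlink
      (Submodule.add_mem _ ζ.2 h8) h9
  -- first division
  obtain ⟨τs, a₁, hτs, hx1⟩ := claim1 x (by rw [hx]; exact Submodule.zero_mem _)
  -- iterate: x = f^(k+1) * c + τs for all k
  have key2 : ∀ k : ℕ, ∃ c, x = f ^ (k + 1) * c + τs := by
    intro k
    induction k with
    | zero => exact ⟨a₁, by rw [pow_one, hx1]; ring⟩
    | succ n ih =>
      obtain ⟨c, hc⟩ := ih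
      have e0 : f ^ (n + 1) * c = x + (-τs) := by rw [hc]; ring
      have e1 : (f ^ (n + 1) * c) ^ p = x ^ p + (-τs) ^ p := by
        rw [e0]
        exact PT_fresh hp kill hpI _ (Submodule.neg_mem _ hτs)
      have e2 : f ^ ((n + 1) * p) * c ^ p = (-τs) ^ p := by
        rw [hx, zero_add] at e1
        rw [← e1, mul_pow, ← pow_mul]
      have e3 : f ^ ((n + 1) * p) * c ^ p ∈ Itor I S := by
        rw [e2]
        exact PT_pow_tor (Submodule.neg_mem _ hτs) hp.pos.ne'
      have e4 : f ^ ((n + 1) * p + 1) * c ^ p = 0 := by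
        calc f ^ ((n + 1) * p + 1) * c ^ p = f * (f ^ ((n + 1) * p) * c ^ p) := by
              rw [pow_succ]; ring
          _ = 0 := kill f (gen_mem hI) _ e3
      have e5 : c ^ p ∈ Itor I S := PT_itor_of_pow_ann hI e4
      obtain ⟨τ', a, hτ', hca⟩ := claim1 c e5
      refine ⟨a, ?_⟩
      have e6 : f ^ (n + 1) * τ' = 0 := by
        rw [pow_succ', mul_assoc]
        exact kill f (gen_mem hI) _ (mul_mem_Itor hτ')
      rw [hc, hca, pow_succ]
      linear_combination e6
  -- separatedness: x equals its torsion part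
  have hall : ∀ n : ℕ, x - τs ∈ I ^ n := by
    intro n
    cases n with
    | zero => exact mem_pow_zero _ _
    | succ m =>
      obtain ⟨c, hc⟩ := key2 m
      have e7 : x - τs = f ^ (m + 1) * c := by linear_combination hc
      rw [e7, hI, Ideal.span_singleton_pow, Ideal.mem_span_singleton']
      exact ⟨c, mul_comm _ _⟩
  have hmem : x - τs ∈ (⨅ n : ℕ, I ^ n) := (Submodule.mem_iInf _).mpr hall
  rw [hsep] at hmem
  have hxt : x = τs := sub_eq_zero.mp (Submodule.mem_bot _ |>.mp hmem)
  have hxtor : x ∈ Itor I S := by rw [hxt]; exact hτs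
  -- final: torsion p-nilpotents vanish
  obtain ⟨z, hz⟩ := hFt_bij.2 ⟨x, hxtor⟩
  have hzt : tt x = z.1 ^ p := by
    have h := PT_tFt hp hI hI' htf kill kill' htb hFF hFt z
    rw [hz] at h
    exact h
  have hzp0 : z.1 ^ p = 0 := by
    have m1 : Ideal.Quotient.mk I (Ft ⟨z.1 ^ p, PT_pow_tor z.2 hp.pos.ne'⟩).1 = 0 := by
      rw [hFt]
      show FF (Ideal.Quotient.mk I' (z.1 ^ p)) = 0
      rw [map_pow, map_pow]
      have e8 : FF (Ideal.Quotient.mk I' z.1) = Ideal.Quotient.mk I x := by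
        rw [← hFt z, hz]
      rw [e8, ← map_pow, hx, map_zero]
    have v0 : (Ft ⟨z.1 ^ p, PT_pow_tor z.2 hp.pos.ne'⟩).1 = 0 :=
      PT_tor_inter hI kill (Ft _).2 (Ideal.Quotient.eq_zero_iff_mem.mp m1)
    exact PT_Ft_cancel hI kill hFt_bij hFt v0
  have htt0 : tt x = 0 := by rw [hzt, hzp0]
  have hmk0 : tb (Ideal.Quotient.mk I x) = tb 0 := by
    rw [htb, htt0, map_zero, map_zero]
  exact PT_tor_inter hI kill hxtor
    (Ideal.Quotient.eq_zero_iff_mem.mp (htb_inj hmk0))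

end PTCore
section PTInst

variable {R : ℕ → Type u} [∀ i, CommRing (R i)] (t : ∀ i, R i →+* R (i + 1))

lemma PT_chain_comp : ∀ j, (chain1 R t j).comp (chain R t 1) = chain R t (j + 1) := by
  intro j
  induction j with
  | zero =>
    show (RingHom.id (R 1)).comp (chain R t 1) = chain R t 1
    exact RingHom.id_comp _
  | succ n ih =>
    show ((t (n + 1)).comp (chain1 R t n)).comp (chain R t 1) = (t (n + 1)).comp (chain R t (n + 1))
    rw [RingHom.comp_assoc, ih]

lemma PT_chain_succ (j : ℕ) (x : R 0) : t j (chain R t j x) = chain R t (j + 1) x := rfl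

lemma PT_chain1_succ (j : ℕ) (x : R 1) : t (j + 1) (chain1 R t j x) = chain1 R t (j + 1) x := rfl

variable (I0 : Ideal (R 0))

lemma PT_tbar_mk (j : ℕ) (x : R j) :
    tbar R t I0 j (Ideal.Quotient.mk (I0R R t I0 j) x)
      = Ideal.Quotient.mk (I0R R t I0 (j + 1)) (t j x) :=
  Ideal.quotientMap_mk

lemma PT_I0R_span {a₀ : R 0} (ha₀ : I0 = Ideal.span {a₀}) (j : ℕ) :
    I0R R t I0 j = Ideal.span {chain R t j a₀} := by
  rw [I0R, ha₀, Ideal.map_span, Set.image_singleton]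

lemma PT_p_mem {p : ℕ} (hp0 : (p : R 0) ∈ I0) (j : ℕ) : (p : R j) ∈ I0R R t I0 j := by
  have h1 : chain R t j (p : R 0) ∈ I0R R t I0 j := Ideal.mem_map_of_mem _ hp0
  rwa [map_natCast] at h1

lemma PT_I1_span {p : ℕ} {I1 : Ideal (R 1)} {b₁ : R 1} (hb₁ : I1 = Ideal.span {b₁})
    (hI1p : I1 ^ p = I0R R t I0 1) (j : ℕ) :
    Ideal.span {chain1 R t j b₁} ^ p = I0R R t I0 (j + 1) := by
  have h1 : Ideal.span {chain1 R t j b₁} = Ideal.map (chain1 R t j) I1 := by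
    rw [hb₁, Ideal.map_span, Set.image_singleton]
  rw [h1, ← Ideal.map_pow, hI1p, I0R, Ideal.map_map, PT_chain_comp]
  rfl

lemma PT_ker_span {I1 : Ideal (R 1)} {b₁ : R 1} (hb₁ : I1 = Ideal.span {b₁})
    (F : ∀ i, R (i + 1) ⧸ I0R R t I0 (i + 1) →+* R i ⧸ I0R R t I0 i)
    (hker : ∀ i, RingHom.ker (F i) =
      I1.map ((Ideal.Quotient.mk (I0R R t I0 (i + 1))).comp (chain1 R t i))) (j : ℕ) :
    RingHom.ker (F j) =
      Ideal.span {Ideal.Quotient.mk (I0R R t I0 (j + 1)) (chain1 R t j b₁)} := by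
  rw [hker j, hb₁, Ideal.map_span, Set.image_singleton]
  rfl

end PTInst
/-- **Corollary 3.5 (2).** For a preperfectoid tower with `Rᵢ` and `Rᵢ₊₁`
`I₀`-adically separated, the ring `Rᵢ` is reduced. -/
theorem stmt11
    (p : ℕ) (hp : p.Prime)
    {R : ℕ → Type u} [∀ i, CommRing (R i)] (t : ∀ i, R i →+* R (i + 1))
    (I0 : Ideal (R 0))
    (hp0 : (p : R 0) ∈ I0)
    (hb : ∀ i, Function.Injective (tbar R t I0 i))
    (F : ∀ i, R (i + 1) ⧸ I0R R t I0 (i + 1) →+* R i ⧸ I0R R t I0 i)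
    (hF : ∀ i x, tbar R t I0 i (F i x) = x ^ p)
    (hd : ∀ i, Function.Surjective (F i))
    (hI0 : I0.IsPrincipal)
    (I1 : Ideal (R 1)) (hI1 : I1.IsPrincipal)
    (hI1p : I1 ^ p = I0R R t I0 1)
    (hker : ∀ i, RingHom.ker (F i) =
      I1.map ((Ideal.Quotient.mk (I0R R t I0 (i + 1))).comp (chain1 R t i)))
    (hg : ∀ i, CondG R t I0 F i)
    (i : ℕ)
    (hsep₁ : (⨅ n : ℕ, (I0R R t I0 i) ^ n) = ⊥)
    (hsep₂ : (⨅ n : ℕ, (I0R R t I0 (i + 1)) ^ n) = ⊥) :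
    IsReduced (R i) := by
  haveI := hI0
  obtain ⟨a₀, ha₀⟩ := Submodule.IsPrincipal.principal I0
  haveI := hI1
  obtain ⟨b₁, hb₁⟩ := Submodule.IsPrincipal.principal I1
  rw [Ideal.submodule_span_eq] at ha₀ hb₁
  obtain ⟨kill₀, Ft₀, hFt₀_bij, hFt₀⟩ := hg i
  obtain ⟨kill₁, Ft₁, hFt₁_bij, hFt₁⟩ := hg (i + 1)
  have kill₂ := (hg (i + 1 + 1)).1
  have hcore : ∀ x : R i, x ^ p = 0 → x = 0 :=
    PT_core hp
      (PT_I0R_span t I0 ha₀ i) (PT_I0R_span t I0 ha₀ (i + 1)) (PT_I0R_span t I0 ha₀ (i + 1 + 1))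
      (PT_chain_succ t i a₀) (PT_chain_succ t (i + 1) a₀)
      kill₀ kill₁ kill₂
      (PT_p_mem t I0 hp0 i) (PT_p_mem t I0 hp0 (i + 1)) (PT_p_mem t I0 hp0 (i + 1 + 1))
      (PT_tbar_mk t I0 i) (PT_tbar_mk t I0 (i + 1))
      (hb i) (hb (i + 1))
      (hF i) (hF (i + 1))
      (PT_ker_span t I0 hb₁ F hker i) (PT_ker_span t I0 hb₁ F hker (i + 1))
      (hd i)
      (PT_I1_span t I0 hb₁ hI1p i) (PT_I1_span t I0 hb₁ hI1p (i + 1))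
      (PT_chain1_succ t i b₁)
      hFt₀_bij hFt₁_bij hFt₀ hFt₁
      hsep₁ hsep₂
  constructor
  intro x hx
  have hppow : ∀ k : ℕ, ∀ y : R i, y ^ (p ^ k) = 0 → y = 0 := by
    intro k
    induction k with
    | zero => intro y hy; rwa [pow_zero, pow_one] at hy
    | succ m ih =>
      intro y hy
      apply ih
      apply hcore
      rw [← pow_mul, ← pow_succ]
      exact hy
  obtain ⟨n, hn⟩ := hx
  apply hppow n
  have hnle : n ≤ p ^ n := Nat.le_of_lt (Nat.lt_pow_self (n := n) hp.one_lt)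
  calc x ^ p ^ n = x ^ n * x ^ (p ^ n - n) := by rw [← pow_add, Nat.add_sub_cancel' hnle]
    _ = 0 := by rw [hn, zero_mul]
end Preamble
end

section
/- Let R = {R_i, t_i}_{i≥0} be a preperfectoid tower arising from a pair (R, I_0). Then for every i ≥ 0, the canonical isomorphism R_i^{s♭}/I_0^{s♭}R_i^{s♭} ≅ R_i/I_0R_i induced by the 0-th projection extends to an isomorphism of graded rings gr_{I_0^{s♭}}(R_i^{s♭}) ≅ gr_{I_0}(R_i). -/
open Submodule

section Preamble

variable {A : Type*} [CommRing A]

section Tilt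

universe u

variable (R : ℕ → Type u) [∀ i, CommRing (R i)] (t : ∀ i, R i →+* R (i + 1))
  (I0 : Ideal (R 0)) (p : ℕ)

lemma natCast_p_mem (hp0 : (p : R 0) ∈ I0) (j : ℕ) : (p : R j) ∈ I0R R t I0 j := by
  have : chain R t j ((p : R 0)) ∈ I0R R t I0 j := Ideal.mem_map_of_mem _ hp0
  rwa [map_natCast] at this

lemma p_zero_quot (hp0 : (p : R 0) ∈ I0) (j : ℕ) : (p : R j ⧸ I0R R t I0 j) = 0 := by
  have : ((p : R j) : R j ⧸ I0R R t I0 j) = 0 :=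
    (Ideal.Quotient.eq_zero_iff_mem).mpr (natCast_p_mem R t I0 p hp0 j)
  rwa [map_natCast (Ideal.Quotient.mk (I0R R t I0 j))] at this

lemma add_pow_p' {S : Type*} [CommRing S] (hp : p.Prime) (h0 : (p : S) = 0) (x y : S) :
    (x + y) ^ p = x ^ p + y ^ p := by
  rcases subsingleton_or_nontrivial S with h | h
  · exact Subsingleton.elim _ _
  · have hdvd : ringChar S ∣ p := ringChar.dvd h0
    have hchar : ringChar S = p := ((Nat.dvd_prime hp).mp hdvd).resolve_left (CharP.ringChar_ne_one)
    haveI : CharP S p := hchar ▸ ringChar.charP S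
    haveI : Fact p.Prime := ⟨hp⟩
    exact add_pow_char x y p

variable (F : ∀ i, R (i + 1) ⧸ I0R R t I0 (i + 1) →+* R i ⧸ I0R R t I0 i)

/-- The `i`-th small tilt: the inverse limit of `(⋯ → R_{i+1}/I₀R_{i+1} → R_i/I₀R_i)`
along the Frobenius projections, realized as a subring of the product over all levels
`j ≥ i`. -/
def tilt (i : ℕ) : Subring (∀ j : {j : ℕ // i ≤ j}, R j ⧸ I0R R t I0 j) where
  carrier := {f | ∀ (j : ℕ) (h : i ≤ j),
    F j (f ⟨j + 1, h.trans (Nat.le_succ j)⟩) = f ⟨j, h⟩}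
  zero_mem' := fun j h => by simp
  one_mem' := fun j h => by simp
  add_mem' := fun {a b} ha hb j h => by
    simp only [Pi.add_apply, map_add, ha j h, hb j h]
  mul_mem' := fun {a b} ha hb j h => by
    simp only [Pi.mul_apply, map_mul, ha j h, hb j h]
  neg_mem' := fun {a} ha j h => by
    simp only [Pi.neg_apply, map_neg, ha j h]

/-- The projection `R_i^{s♭} → R_i/I₀R_i` (the `0`-th projection). -/
def tiltProj (i : ℕ) : ↥(tilt R t I0 F i) →+* R i ⧸ I0R R t I0 i :=
  (Pi.evalRingHom _ (⟨i, le_refl i⟩ : {j : ℕ // i ≤ j})).comp (tilt R t I0 F i).subtype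

/-- The transition map `t_i^{s♭} : R_i^{s♭} → R_{i+1}^{s♭}` of the tilted tower. -/
def tsb (hp : p.Prime) (hp0 : (p : R 0) ∈ I0)
    (hF : ∀ i x, tbar R t I0 i (F i x) = x ^ p) (i : ℕ) :
    ↥(tilt R t I0 F i) →+* ↥(tilt R t I0 F (i + 1)) where
  toFun f := ⟨fun j => (f.1 ⟨j.1, (Nat.le_succ i).trans j.2⟩) ^ p, by
    intro j h
    have := f.2 j ((Nat.le_succ i).trans h)
    simp only [map_pow, this]⟩
  map_one' := Subtype.ext (funext fun j => one_pow p)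
  map_mul' x y := Subtype.ext (funext fun j => mul_pow _ _ p)
  map_zero' := Subtype.ext (funext fun j => zero_pow hp.ne_zero)
  map_add' x y := Subtype.ext (funext fun j =>
    add_pow_p' p hp (p_zero_quot R t I0 p hp0 _) _ _)

/-- The composite transition map `R_0^{s♭} → R_i^{s♭}` of the tilted tower. -/
def tsbChain (hp : p.Prime) (hp0 : (p : R 0) ∈ I0)
    (hF : ∀ i x, tbar R t I0 i (F i x) = x ^ p) :
    ∀ i, ↥(tilt R t I0 F 0) →+* ↥(tilt R t I0 F i)
  | 0 => RingHom.id _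
  | (i + 1) => (tsb R t I0 p F hp hp0 hF i).comp (tsbChain hp hp0 hF i)

/-- `I₀^{s♭}`: the kernel of the `0`-th projection `R_0^{s♭} → R_0/I₀`. -/
def I0sb : Ideal ↥(tilt R t I0 F 0) := RingHom.ker (tiltProj R t I0 F 0)

/-- `I₀^{s♭}R_i^{s♭}`: the extension of `I₀^{s♭}` to the `i`-th small tilt. -/
def I0sbR (hp : p.Prime) (hp0 : (p : R 0) ∈ I0)
    (hF : ∀ i x, tbar R t I0 i (F i x) = x ^ p) (i : ℕ) : Ideal ↥(tilt R t I0 F i) :=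
  (I0sb R t I0 F).map (tsbChain R t I0 p F hp hp0 hF i)

end Tilt
section Aux

universe v

variable {R : ℕ → Type v} [∀ i, CommRing (R i)]

set_option maxHeartbeats 1000000
set_option synthInstance.maxHeartbeats 200000

/-- All the data and hypotheses of a preperfectoid tower, bundled. -/
structure Pkg (R : ℕ → Type v) [∀ i, CommRing (R i)] where
  t : ∀ i, R i →+* R (i + 1)
  I0 : Ideal (R 0)
  p : ℕ
  hp : p.Prime
  hp0 : (p : R 0) ∈ I0
  F : ∀ i, R (i + 1) ⧸ I0R R t I0 (i + 1) →+* R i ⧸ I0R R t I0 i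
  hb : ∀ i, Function.Injective (tbar R t I0 i)
  hF : ∀ i x, tbar R t I0 i (F i x) = x ^ p
  hd : ∀ i, Function.Surjective (F i)
  f0 : R 0
  hf0 : I0 = Ideal.span {f0}
  f1 : R 1
  h1p : Ideal.span {f1} ^ p = I0R R t I0 1
  hker : ∀ i, RingHom.ker (F i) =
      (Ideal.span {f1}).map ((Ideal.Quotient.mk (I0R R t I0 (i + 1))).comp (chain1 R t i))
  hg : ∀ i, CondG R t I0 F i

namespace Pkg

variable (P : Pkg R)

/-- image of the generator of `I1` in `R (j+1)`. -/
def ee (j : ℕ) : R (j + 1) := chain1 R P.t j P.f1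

/-- image of the generator of `I0` in `R j`. -/
def f0R (j : ℕ) : R j := chain R P.t j P.f0

/-- the quotient projection. -/
abbrev q (j : ℕ) : R j →+* R j ⧸ I0R R P.t P.I0 j := Ideal.Quotient.mk _

lemma chain1_chain (j : ℕ) (x : R 0) :
    chain1 R P.t j (chain R P.t 1 x) = chain R P.t (j + 1) x := by
  induction j with
  | zero => rfl
  | succ j ih =>
      show P.t (j + 1) (chain1 R P.t j (chain R P.t 1 x)) = P.t (j + 1) (chain R P.t (j + 1) x)
      rw [ih]

lemma I0R_span (j : ℕ) : I0R R P.t P.I0 j = Ideal.span {P.f0R j} := by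
  rw [I0R, P.hf0, Ideal.map_span, Set.image_singleton]; rfl

lemma f0R_mem (j : ℕ) : P.f0R j ∈ I0R R P.t P.I0 j := by
  rw [P.I0R_span]; exact Ideal.mem_span_singleton_self _

lemma I0R_e_span (j : ℕ) : I0R R P.t P.I0 (j + 1) = Ideal.span {P.ee j ^ P.p} := by
  have h1 : I0R R P.t P.I0 1 = Ideal.span {P.f1 ^ P.p} := by
    rw [← P.h1p, Ideal.span_singleton_pow]
  have h2 : Ideal.map (chain1 R P.t j) (I0R R P.t P.I0 1) = I0R R P.t P.I0 (j + 1) := by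
    rw [I0R, I0R, Ideal.map_map]
    congr 1
    exact RingHom.ext (P.chain1_chain j)
  rw [← h2, h1, Ideal.map_span, Set.image_singleton, map_pow]; rfl

lemma ee_pow_mem (j : ℕ) : P.ee j ^ P.p ∈ I0R R P.t P.I0 (j + 1) := by
  rw [P.I0R_e_span]; exact Ideal.mem_span_singleton_self _

lemma kerF_span (j : ℕ) :
    RingHom.ker (P.F j) = Ideal.span {P.q (j + 1) (P.ee j)} := by
  rw [P.hker j, Ideal.map_span, Set.image_singleton]; rfl

lemma tbar_mk (j : ℕ) (x : R j) :
    tbar R P.t P.I0 j (P.q j x) = P.q (j + 1) (P.t j x) :=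
  Ideal.quotientMap_mk

/-- the sequence `f_j`, with `f_1` the class of `e_0` and arbitrary `F`-preimages above. -/
noncomputable def fseq : ∀ j, R j ⧸ I0R R P.t P.I0 j
  | 0 => 0
  | 1 => P.q 1 (P.ee 0)
  | (j + 2) => Classical.choose (P.hd (j + 1) (fseq (j + 1)))

lemma F_fseq (j : ℕ) : P.F j (P.fseq (j + 1)) = P.fseq j := by
  cases j with
  | zero =>
      show P.F 0 (P.q 1 (P.ee 0)) = 0
      apply P.hb 0
      rw [P.hF, map_zero, ← map_pow]
      exact Ideal.Quotient.eq_zero_iff_mem.mpr (P.ee_pow_mem 0)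
  | succ j =>
      show P.F (j + 1) (Classical.choose (P.hd (j + 1) (P.fseq (j + 1)))) = _
      exact Classical.choose_spec (P.hd (j + 1) (P.fseq (j + 1)))

lemma fseq_pow_p (j : ℕ) :
    P.fseq (j + 1) ^ P.p = tbar R P.t P.I0 j (P.fseq j) := by
  rw [← P.hF j (P.fseq (j + 1)), P.F_fseq]

lemma fseq_pow_e (j : ℕ) :
    P.fseq (j + 1) ^ P.p ^ j = P.q (j + 1) (P.ee j) := by
  induction j with
  | zero => rw [pow_zero, pow_one]; rfl
  | succ j ih =>
      calc P.fseq (j + 2) ^ P.p ^ (j + 1)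
          = (P.fseq (j + 2) ^ P.p) ^ P.p ^ j := by rw [← pow_mul, pow_succ']
        _ = tbar R P.t P.I0 (j + 1) (P.fseq (j + 1)) ^ P.p ^ j := by rw [P.fseq_pow_p]
        _ = tbar R P.t P.I0 (j + 1) (P.fseq (j + 1) ^ P.p ^ j) := (map_pow _ _ _).symm
        _ = P.q (j + 2) (P.ee (j + 1)) := by rw [ih, P.tbar_mk]; rfl

lemma fseq_nilp (j : ℕ) : P.fseq j ^ P.p ^ j = 0 := by
  cases j with
  | zero => show (0 : R 0 ⧸ I0R R P.t P.I0 0) ^ P.p ^ 0 = 0; rw [pow_zero, pow_one]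
  | succ j =>
      rw [pow_succ, pow_mul, P.fseq_pow_e, ← map_pow]
      exact Ideal.Quotient.eq_zero_iff_mem.mpr (P.ee_pow_mem j)

lemma mem_tor_iff (j : ℕ) (x : R j) :
    x ∈ Itor (I0R R P.t P.I0 j) (R j) ↔ ∃ m, P.f0R j ^ m * x = 0 := by
  constructor
  · intro h
    obtain ⟨m, hm⟩ := h (P.f0R j) (P.f0R_mem j)
    exact ⟨m, by simpa [smul_eq_mul] using hm⟩
  · rintro ⟨m, hm⟩ a ha
    rw [P.I0R_span] at ha
    obtain ⟨c, hc⟩ := Ideal.mem_span_singleton'.mp ha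
    refine ⟨m, ?_⟩
    have h2 : a ^ m = c ^ m * P.f0R j ^ m := by rw [← hc, mul_pow]
    rw [smul_eq_mul, h2, mul_assoc, hm, mul_zero]

lemma tor_f0 (j : ℕ) {x : R j} (hx : x ∈ Itor (I0R R P.t P.I0 j) (R j)) :
    P.f0R j * x = 0 :=
  (P.hg j).1 _ (P.f0R_mem j) x hx

lemma tor_cap (j : ℕ) {x : R j} (hx : x ∈ Itor (I0R R P.t P.I0 j) (R j))
    (hx2 : x ∈ I0R R P.t P.I0 j) : x = 0 := by
  rw [P.I0R_span] at hx2
  obtain ⟨r, hr⟩ := Ideal.mem_span_singleton'.mp hx2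
  obtain ⟨m, hm⟩ := (P.mem_tor_iff j x).mp hx
  have h1 : P.f0R j ^ (m + 1) * r = 0 := by
    have h2 : P.f0R j ^ (m + 1) * r = P.f0R j ^ m * x := by rw [← hr]; ring
    rw [h2, hm]
  have hrT : r ∈ Itor (I0R R P.t P.I0 j) (R j) := (P.mem_tor_iff j r).mpr ⟨m + 1, h1⟩
  have h3 : P.f0R j * r = 0 := P.tor_f0 j hrT
  rw [← hr, mul_comm, h3]

/-- The bijection `(F_j)_tor` on torsion parts, from condition (g). -/
noncomputable def Ftor (j : ℕ) :
    ↥(Itor (I0R R P.t P.I0 (j + 1)) (R (j + 1))) → ↥(Itor (I0R R P.t P.I0 j) (R j)) :=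
  Classical.choose (P.hg j).2

lemma Ftor_bij (j : ℕ) : Function.Bijective (P.Ftor j) :=
  (Classical.choose_spec (P.hg j).2).1

lemma Ftor_comp (j : ℕ) (x : R (j + 1)) (hx : x ∈ Itor (I0R R P.t P.I0 (j + 1)) (R (j + 1))) :
    P.q j ((P.Ftor j ⟨x, hx⟩ : R j)) = P.F j (P.q (j + 1) x) :=
  (Classical.choose_spec (P.hg j).2).2 ⟨x, hx⟩

lemma Ftor_zero (j : ℕ) : ((P.Ftor j 0 : R j)) = 0 := by
  have h2 : P.q j ((P.Ftor j 0 : R j)) = 0 := by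
    have := P.Ftor_comp j 0 (Submodule.zero_mem _)
    rw [map_zero, map_zero] at this
    exact this
  exact P.tor_cap j (P.Ftor j 0).2 (Ideal.Quotient.eq_zero_iff_mem.mp h2)

lemma tor_inj_zero (j : ℕ) (x : R (j + 1))
    (hx : x ∈ Itor (I0R R P.t P.I0 (j + 1)) (R (j + 1)))
    (h : P.F j (P.q (j + 1) x) = 0) : x = 0 := by
  have h2 : P.q j ((P.Ftor j ⟨x, hx⟩ : R j)) = 0 := by rw [P.Ftor_comp j x hx, h]
  have h3 : ((P.Ftor j ⟨x, hx⟩ : R j)) = 0 :=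
    P.tor_cap j (P.Ftor j ⟨x, hx⟩).2 (Ideal.Quotient.eq_zero_iff_mem.mp h2)
  have h4 : P.Ftor j ⟨x, hx⟩ = P.Ftor j 0 := Subtype.ext (h3.trans (P.Ftor_zero j).symm)
  have h5 : (⟨x, hx⟩ : ↥(Itor (I0R R P.t P.I0 (j + 1)) (R (j + 1)))) = 0 := (P.Ftor_bij j).1 h4
  exact congrArg Subtype.val h5

lemma F_q_ee (j : ℕ) : P.F j (P.q (j + 1) (P.ee j)) = 0 := by
  rw [← P.fseq_pow_e, map_pow, P.F_fseq, P.fseq_nilp]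

lemma ee_tor (j : ℕ) {ζ : R (j + 1)}
    (hζ : ζ ∈ Itor (I0R R P.t P.I0 (j + 1)) (R (j + 1))) : P.ee j * ζ = 0 := by
  have hmem : P.ee j * ζ ∈ Itor (I0R R P.t P.I0 (j + 1)) (R (j + 1)) := mul_mem_Itor hζ
  have h : P.F j (P.q (j + 1) (P.ee j * ζ)) = 0 := by
    rw [map_mul, map_mul, P.F_q_ee, zero_mul]
  exact P.tor_inj_zero j _ hmem h

lemma tor_fseq (j : ℕ) (hj : 1 ≤ j) (ε : R j)
    (hε : ε ∈ Itor (I0R R P.t P.I0 j) (R j)) (w : R j) (hw : P.q j w = P.fseq j) :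
    w * ε = 0 := by
  induction j, hj using Nat.le_induction with
  | base =>
      have hw1 : P.q 1 w = P.q 1 (P.ee 0) := hw
      have hw' : w - P.ee 0 ∈ I0R R P.t P.I0 1 := Ideal.Quotient.eq.mp hw1
      rw [P.I0R_span] at hw'
      obtain ⟨r, hr⟩ := Ideal.mem_span_singleton'.mp hw'
      have h1 : P.ee 0 * ε = 0 := P.ee_tor 0 hε
      have h2 : P.f0R 1 * ε = 0 := P.tor_f0 1 hε
      have hw2 : w = P.ee 0 + r * P.f0R 1 := by linear_combination -hr
      rw [hw2, add_mul, h1, mul_assoc, h2, mul_zero, add_zero]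
  | succ j hj ih =>
      have hmem : w * ε ∈ Itor (I0R R P.t P.I0 (j + 1)) (R (j + 1)) := mul_mem_Itor hε
      obtain ⟨w', hw'⟩ := Ideal.Quotient.mk_surjective (P.fseq j)
      have hkill : w' * (P.Ftor j ⟨ε, hε⟩ : R j) = 0 :=
        ih _ (P.Ftor j ⟨ε, hε⟩).2 w' hw'
      have hΦ : P.F j (P.q (j + 1) (w * ε)) = 0 := by
        rw [map_mul, map_mul, hw, P.F_fseq, ← P.Ftor_comp j ε hε, ← hw', ← map_mul,
          hkill, map_zero]
      exact P.tor_inj_zero j _ hmem hΦ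

lemma tor_fseq_pow (j m : ℕ) (hm : 1 ≤ m) (ε : R j)
    (hε : ε ∈ Itor (I0R R P.t P.I0 j) (R j)) :
    P.q j ε * P.fseq j ^ m = 0 := by
  cases j with
  | zero =>
      show P.q 0 ε * (0 : R 0 ⧸ I0R R P.t P.I0 0) ^ m = 0
      rw [zero_pow (by omega), mul_zero]
  | succ j =>
      obtain ⟨m', rfl⟩ : ∃ m', m = m' + 1 := ⟨m - 1, by omega⟩
      obtain ⟨w, hw⟩ := Ideal.Quotient.mk_surjective (P.fseq (j + 1))
      have hk : w * ε = 0 := P.tor_fseq (j + 1) (by omega) ε hε w hw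
      calc P.q (j + 1) ε * P.fseq (j + 1) ^ (m' + 1)
          = P.q (j + 1) (w * ε) * P.fseq (j + 1) ^ m' := by rw [map_mul, ← hw]; ring
        _ = 0 := by rw [hk, map_zero, zero_mul]

lemma ann_e_decomp (j : ℕ) (x : R (j + 1) ⧸ I0R R P.t P.I0 (j + 1))
    (hx : x * P.q (j + 1) (P.ee j) = 0) :
    ∃ (y : R (j + 1) ⧸ I0R R P.t P.I0 (j + 1)) (ζ : R (j + 1)),
      ζ ∈ Itor (I0R R P.t P.I0 (j + 1)) (R (j + 1)) ∧
      x = y * P.q (j + 1) (P.ee j) ^ (P.p - 1) + P.q (j + 1) ζ := by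
  obtain ⟨X, hX⟩ := Ideal.Quotient.mk_surjective x
  have hmem : X * P.ee j ∈ I0R R P.t P.I0 (j + 1) := by
    rw [← Ideal.Quotient.eq_zero_iff_mem]
    show P.q (j + 1) (X * P.ee j) = 0
    rw [map_mul, hX]
    exact hx
  rw [P.I0R_e_span j] at hmem
  obtain ⟨s, hs⟩ := Ideal.mem_span_singleton'.mp hmem
  have hp1 : P.p - 1 + 1 = P.p := by have := P.hp.two_le; omega
  have key : (X - s * P.ee j ^ (P.p - 1)) * P.ee j = 0 := by
    rw [sub_mul, mul_assoc, ← pow_succ, hp1, hs, sub_self]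
  have hζ : X - s * P.ee j ^ (P.p - 1) ∈ Itor (I0R R P.t P.I0 (j + 1)) (R (j + 1)) := by
    rw [P.mem_tor_iff]
    have hf : P.f0R (j + 1) ∈ Ideal.span {P.ee j ^ P.p} := by
      rw [← P.I0R_e_span]; exact P.f0R_mem _
    obtain ⟨c, hc⟩ := Ideal.mem_span_singleton'.mp hf
    refine ⟨1, ?_⟩
    rw [pow_one, ← hc]
    have hsplit : P.ee j ^ P.p = P.ee j ^ (P.p - 1) * P.ee j := by rw [← pow_succ, hp1]
    calc c * P.ee j ^ P.p * (X - s * P.ee j ^ (P.p - 1))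
        = c * P.ee j ^ (P.p - 1) * ((X - s * P.ee j ^ (P.p - 1)) * P.ee j) := by
          rw [hsplit]; ring
      _ = 0 := by rw [key, mul_zero]
  refine ⟨P.q (j + 1) s, _, hζ, ?_⟩
  rw [← hX, ← map_pow, ← map_mul, ← map_add]
  congr 1
  ring

lemma ann_e_F (j : ℕ) (x : R (j + 1) ⧸ I0R R P.t P.I0 (j + 1))
    (hx : x * P.q (j + 1) (P.ee j) = 0) :
    ∃ ε, ε ∈ Itor (I0R R P.t P.I0 j) (R j) ∧ P.F j x = P.q j ε := by
  obtain ⟨y, ζ, hζ, hdec⟩ := P.ann_e_decomp j x hx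
  refine ⟨(P.Ftor j ⟨ζ, hζ⟩ : R j), (P.Ftor j ⟨ζ, hζ⟩).2, ?_⟩
  have hpne : P.p - 1 ≠ 0 := by have := P.hp.two_le; omega
  rw [hdec, map_add, map_mul, map_pow, P.F_q_ee, zero_pow hpne, mul_zero, zero_add,
    ← P.Ftor_comp j ζ hζ]

/-! ### Tilt-side machinery -/

/-- the `k`-th component map on the `i`-th small tilt. -/
def compHom (i k : ℕ) : ↥(tilt R P.t P.I0 P.F i) →+* R (i + k) ⧸ I0R R P.t P.I0 (i + k) :=
  (Pi.evalRingHom _ (⟨i + k, Nat.le_add_right i k⟩ : {j : ℕ // i ≤ j})).comp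
    (tilt R P.t P.I0 P.F i).subtype

lemma compHom_coh (i k : ℕ) (a : ↥(tilt R P.t P.I0 P.F i)) :
    P.F (i + k) (P.compHom i (k + 1) a) = P.compHom i k a :=
  a.2 (i + k) (Nat.le_add_right i k)

lemma tiltProj_eq (i : ℕ) : tiltProj R P.t P.I0 P.F i = P.compHom i 0 := rfl

lemma tilt_ext {i : ℕ} {x y : ↥(tilt R P.t P.I0 P.F i)}
    (h : ∀ k, P.compHom i k x = P.compHom i k y) : x = y := by
  apply Subtype.ext
  funext j
  obtain ⟨j, hj⟩ := j
  obtain ⟨k, rfl⟩ : ∃ k, j = i + k := ⟨j - i, by omega⟩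
  exact h k

/-- underlying function of an element of the tilt built from a compatible sequence. -/
noncomputable def liftSeqFun (i : ℕ) (c : ∀ k, R (i + k) ⧸ I0R R P.t P.I0 (i + k)) :
    ∀ j : {j : ℕ // i ≤ j}, R j.1 ⧸ I0R R P.t P.I0 j.1 :=
  fun j => cast (congrArg (fun m => R m ⧸ I0R R P.t P.I0 m)
    ((by omega : i + (j.1 - i) = j.1))) (c (j.1 - i))

lemma liftSeq_cast (i : ℕ) (c : ∀ k, R (i + k) ⧸ I0R R P.t P.I0 (i + k)) {m k : ℕ}
    (e : i + m = i + k) :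
    cast (congrArg (fun n => R n ⧸ I0R R P.t P.I0 n) e) (c m) = c k := by
  obtain rfl : m = k := by omega
  rfl

lemma liftSeqFun_eval (i : ℕ) (c : ∀ k, R (i + k) ⧸ I0R R P.t P.I0 (i + k)) (k : ℕ)
    (h : i ≤ i + k) :
    P.liftSeqFun i c ⟨i + k, h⟩ = c k :=
  P.liftSeq_cast i c (show i + ((i + k) - i) = i + k by omega)

/-- element of the tilt built from a compatible sequence. -/
noncomputable def liftSeq (i : ℕ) (c : ∀ k, R (i + k) ⧸ I0R R P.t P.I0 (i + k))
    (hc : ∀ k, P.F (i + k) (c (k + 1)) = c k) : ↥(tilt R P.t P.I0 P.F i) :=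
  ⟨P.liftSeqFun i c, by
    intro j h
    obtain ⟨k, rfl⟩ : ∃ k, j = i + k := ⟨j - i, by omega⟩
    show P.F (i + k) (P.liftSeqFun i c ⟨i + (k + 1), _⟩) = P.liftSeqFun i c ⟨i + k, h⟩
    rw [P.liftSeqFun_eval i c (k + 1), P.liftSeqFun_eval i c k]
    exact hc k⟩

lemma liftSeq_compT (i : ℕ) (c : ∀ k, R (i + k) ⧸ I0R R P.t P.I0 (i + k))
    (hc : ∀ k, P.F (i + k) (c (k + 1)) = c k) (k : ℕ) :
    P.compHom i k (P.liftSeq i c hc) = c k :=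
  P.liftSeqFun_eval i c k _

lemma cast_fseq_pow {m j : ℕ} (e : m = j) (a : ℕ) :
    cast (congrArg (fun n => R n ⧸ I0R R P.t P.I0 n) e) (P.fseq m ^ a) = P.fseq j ^ a := by
  cases e; rfl

/-- the generator of the tilted ideal at level `i`. -/
noncomputable def gS (i : ℕ) : ↥(tilt R P.t P.I0 P.F i) :=
  P.liftSeq i (fun k => P.fseq (i + k) ^ P.p ^ i) (by
    intro k
    show P.F (i + k) (P.fseq (i + k + 1) ^ P.p ^ i) = P.fseq (i + k) ^ P.p ^ i
    rw [map_pow, P.F_fseq])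

lemma gS_eval (i j : ℕ) (h : i ≤ j) :
    (P.gS i).1 ⟨j, h⟩ = P.fseq j ^ P.p ^ i := by
  have h1 : (P.gS i).1 ⟨j, h⟩ = cast (congrArg (fun n => R n ⧸ I0R R P.t P.I0 n)
      (show i + (j - i) = j by omega)) (P.fseq (i + (j - i)) ^ P.p ^ i) := rfl
  rw [h1]
  exact P.cast_fseq_pow (show i + (j - i) = j by omega) (P.p ^ i)

lemma gS_compT (i k : ℕ) : P.compHom i k (P.gS i) = P.fseq (i + k) ^ P.p ^ i :=
  P.gS_eval i (i + k) (Nat.le_add_right i k)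

lemma pi_surj (i : ℕ) : Function.Surjective (tiltProj R P.t P.I0 P.F i) := by
  intro y
  refine ⟨P.liftSeq i (fun k => Nat.rec y (fun k ck => Classical.choose (P.hd (i + k) ck)) k)
    (fun k => Classical.choose_spec (P.hd (i + k) _)), ?_⟩
  rw [P.tiltProj_eq]
  exact P.liftSeq_compT i _ _ 0

/-- coherent chains of torsion elements through the bijections `Ftor`. -/
lemma tor_chain (i : ℕ) (ε0 : ↥(Itor (I0R R P.t P.I0 i) (R i))) :
    ∃ s : ∀ k, ↥(Itor (I0R R P.t P.I0 (i + k)) (R (i + k))),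
      s 0 = ε0 ∧ ∀ k, P.Ftor (i + k) (s (k + 1)) = s k :=
  ⟨fun k => Nat.rec ε0 (fun k sk => Function.surjInv (P.Ftor_bij (i + k)).2 sk) k, rfl,
    fun k => Function.surjInv_eq _ _⟩

/-- chains of torsion elements with prescribed differences. -/
lemma tor_chain' (i : ℕ) (d : ∀ k, ↥(Itor (I0R R P.t P.I0 (i + k)) (R (i + k)))) :
    ∃ s : ∀ k, ↥(Itor (I0R R P.t P.I0 (i + k)) (R (i + k))),
      s 0 = 0 ∧ ∀ k, P.Ftor (i + k) (s (k + 1)) = s k - d k :=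
  ⟨fun k => Nat.rec 0 (fun k sk => Function.surjInv (P.Ftor_bij (i + k)).2 (sk - d k)) k, rfl,
    fun k => Function.surjInv_eq _ _⟩

lemma Ftor_comp' (j : ℕ) (x : ↥(Itor (I0R R P.t P.I0 (j + 1)) (R (j + 1)))) :
    P.q j ((P.Ftor j x : R j)) = P.F j (P.q (j + 1) (x : R (j + 1))) :=
  (Classical.choose_spec (P.hg j).2).2 x

lemma ker_compFs (i : ℕ) (a : ↥(tilt R P.t P.I0 P.F i)) (h0 : P.compHom i 0 a = 0) (k : ℕ) :
    ∃ c, P.compHom i k a = c * P.fseq (i + k) ^ P.p ^ i := by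
  induction k with
  | zero => exact ⟨0, by rw [h0, zero_mul]⟩
  | succ k ih =>
      obtain ⟨c, hc⟩ := ih
      obtain ⟨c', hc'⟩ := P.hd (i + k) c
      have hker : (show R (i + k + 1) ⧸ I0R R P.t P.I0 (i + k + 1) from P.compHom i (k + 1) a)
          - c' * P.fseq (i + k + 1) ^ P.p ^ i ∈ RingHom.ker (P.F (i + k)) := by
        rw [RingHom.mem_ker, map_sub, map_mul, map_pow, P.F_fseq, hc', ← hc, P.compHom_coh,
          sub_self]
      rw [P.kerF_span] at hker
      obtain ⟨d, hd2⟩ := Ideal.mem_span_singleton'.mp hker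
      have he : P.q (i + k + 1) (P.ee (i + k)) = P.fseq (i + k + 1) ^ P.p ^ (i + k) :=
        (P.fseq_pow_e (i + k)).symm
      have hexp : P.p ^ (i + k) - P.p ^ i + P.p ^ i = P.p ^ (i + k) :=
        Nat.sub_add_cancel (Nat.pow_le_pow_right P.hp.pos (Nat.le_add_right i k))
      have hsplit : P.fseq (i + k + 1) ^ P.p ^ (i + k)
          = P.fseq (i + k + 1) ^ (P.p ^ (i + k) - P.p ^ i) * P.fseq (i + k + 1) ^ P.p ^ i := by
        rw [← pow_add, hexp]
      refine ⟨c' + d * P.fseq (i + k + 1) ^ (P.p ^ (i + k) - P.p ^ i), ?_⟩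
      have h3 : (show R (i + k + 1) ⧸ I0R R P.t P.I0 (i + k + 1) from P.compHom i (k + 1) a)
          = c' * P.fseq (i + k + 1) ^ P.p ^ i + d * P.q (i + k + 1) (P.ee (i + k)) := by
        linear_combination -hd2
      show (show R (i + k + 1) ⧸ I0R R P.t P.I0 (i + k + 1) from P.compHom i (k + 1) a)
          = (c' + d * P.fseq (i + k + 1) ^ (P.p ^ (i + k) - P.p ^ i))
              * P.fseq (i + k + 1) ^ P.p ^ i
      rw [h3, he, hsplit]
      ring

lemma ker_pi (i : ℕ) (a : ↥(tilt R P.t P.I0 P.F i)) (h0 : P.compHom i 0 a = 0) :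
    ∃ b, b * P.gS i = a := by
  choose W hW using P.ker_compFs i a h0
  have hFf : ∀ k, P.F (i + k) (P.fseq (i + (k + 1))) = P.fseq (i + k) := fun k => P.F_fseq (i + k)
  have hb0 : ∀ k, P.F (i + k) (W (k + 1)) * P.fseq (i + k) ^ P.p ^ i = P.compHom i k a := by
    intro k
    have h4 : P.F (i + k) (W (k + 1) * P.fseq (i + (k + 1)) ^ P.p ^ i) = P.compHom i k a := by
      rw [← hW (k + 1)]
      exact P.compHom_coh i k a
    rw [← h4, map_mul, map_pow, hFf k]
  have hδ : ∀ k, ∃ ε : ↥(Itor (I0R R P.t P.I0 (i + k)) (R (i + k))),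
      P.F (i + k) (P.F (i + (k + 1)) (W (k + 1 + 1))) - P.F (i + k) (W (k + 1)) =
        P.q (i + k) ((ε : R (i + k))) := by
    intro k
    obtain ⟨A, hA⟩ : ∃ A : R (i + k + 1) ⧸ I0R R P.t P.I0 (i + k + 1),
        A = P.F (i + (k + 1)) (W (k + 1 + 1)) := ⟨_, rfl⟩
    obtain ⟨B, hB⟩ : ∃ B : R (i + k + 1) ⧸ I0R R P.t P.I0 (i + k + 1), B = W (k + 1) := ⟨_, rfl⟩
    have hle : P.p ^ i ≤ P.p ^ (i + k) := Nat.pow_le_pow_right P.hp.pos (Nat.le_add_right i k)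
    have hsp : P.fseq (i + k + 1) ^ P.p ^ (i + k)
        = P.fseq (i + k + 1) ^ P.p ^ i * P.fseq (i + k + 1) ^ (P.p ^ (i + k) - P.p ^ i) := by
      rw [← pow_add, Nat.add_sub_cancel' hle]
    have h5 : A * P.fseq (i + k + 1) ^ P.p ^ i = P.compHom i (k + 1) a := by
      rw [hA]; exact hb0 (k + 1)
    have h6 : B * P.fseq (i + k + 1) ^ P.p ^ i = P.compHom i (k + 1) a := by
      rw [hB]; exact (hW (k + 1)).symm
    have hzm : (A - B) * P.fseq (i + k + 1) ^ P.p ^ i = 0 := by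
      rw [sub_mul, h5, h6, sub_self]
    have hze : (A - B) * P.q (i + k + 1) (P.ee (i + k)) = 0 := by
      rw [← P.fseq_pow_e (i + k), hsp, ← mul_assoc, hzm, zero_mul]
    obtain ⟨ε0, h8, h9⟩ := P.ann_e_F (i + k) _ hze
    rw [map_sub, hA, hB] at h9
    exact ⟨⟨ε0, h8⟩, h9⟩
  choose d hd using hδ
  obtain ⟨μ, hμ0, hμF⟩ := P.tor_chain' i d
  have hc : ∀ k, P.F (i + k)
      (P.F (i + (k + 1)) (W (k + 1 + 1)) + P.q (i + (k + 1)) ((μ (k + 1) : R (i + (k + 1)))))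
      = P.F (i + k) (W (k + 1)) + P.q (i + k) ((μ k : R (i + k))) := by
    intro k
    have h1 := hd k
    have h2 : P.F (i + k) (P.q (i + (k + 1)) ((μ (k + 1) : R (i + (k + 1)))))
        = P.q (i + k) ((μ k : R (i + k))) - P.q (i + k) ((d k : R (i + k))) := by
      have h3 : P.q (i + k) ((P.Ftor (i + k) (μ (k + 1)) : R (i + k)))
          = P.F (i + k) (P.q (i + (k + 1)) ((μ (k + 1) : R (i + (k + 1))))) :=
        P.Ftor_comp' (i + k) (μ (k + 1))
      rw [← h3, hμF k, AddSubgroupClass.coe_sub, map_sub]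
    rw [map_add, h2]
    linear_combination h1
  refine ⟨P.liftSeq i (fun k => P.F (i + k) (W (k + 1)) + P.q (i + k) ((μ k : R (i + k)))) hc, ?_⟩
  apply P.tilt_ext
  intro k
  rw [map_mul, P.liftSeq_compT, P.gS_compT, add_mul, hb0 k]
  have h10 : P.q (i + k) ((μ k : R (i + k))) * P.fseq (i + k) ^ P.p ^ i = 0 :=
    P.tor_fseq_pow (i + k) (P.p ^ i) (Nat.one_le_pow i P.p P.hp.pos) _ (μ k).2
  rw [h10, add_zero]

lemma gS_pi_zero (i : ℕ) : P.compHom i 0 (P.gS i) = 0 := by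
  rw [P.gS_compT]
  exact P.fseq_nilp i

lemma ker_pi_span (i : ℕ) :
    RingHom.ker (tiltProj R P.t P.I0 P.F i) = Ideal.span {P.gS i} := by
  apply le_antisymm
  · intro a ha
    rw [RingHom.mem_ker, P.tiltProj_eq] at ha
    obtain ⟨b, hb⟩ := P.ker_pi i a ha
    exact Ideal.mem_span_singleton'.mpr ⟨b, hb⟩
  · rw [Ideal.span_le, Set.singleton_subset_iff, SetLike.mem_coe, RingHom.mem_ker,
      P.tiltProj_eq]
    exact P.gS_pi_zero i

lemma tsbChain_comp (i : ℕ) (x : ↥(tilt R P.t P.I0 P.F 0)) (j : ℕ) :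
    ∀ h : i ≤ j, (tsbChain R P.t P.I0 P.p P.F P.hp P.hp0 P.hF i x).1 ⟨j, h⟩
      = (x.1 ⟨j, Nat.zero_le j⟩) ^ P.p ^ i := by
  induction i with
  | zero =>
      intro h
      rw [pow_zero, pow_one]
      rfl
  | succ i ih =>
      intro h
      show ((tsbChain R P.t P.I0 P.p P.F P.hp P.hp0 P.hF i x).1
        ⟨j, (Nat.le_succ i).trans h⟩) ^ P.p = x.1 ⟨j, Nat.zero_le j⟩ ^ P.p ^ (i + 1)
      rw [ih ((Nat.le_succ i).trans h), ← pow_mul, ← pow_succ]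

lemma tsbChain_gS (i : ℕ) :
    tsbChain R P.t P.I0 P.p P.F P.hp P.hp0 P.hF i (P.gS 0) = P.gS i := by
  apply P.tilt_ext
  intro k
  show (tsbChain R P.t P.I0 P.p P.F P.hp P.hp0 P.hF i (P.gS 0)).1 ⟨i + k, Nat.le_add_right i k⟩
      = P.compHom i k (P.gS i)
  rw [P.tsbChain_comp i (P.gS 0) (i + k) (Nat.le_add_right i k), P.gS_compT,
    P.gS_eval 0 (i + k) (Nat.zero_le _), ← pow_mul, pow_zero, one_mul]

lemma I0sbR_span (i : ℕ) :
    I0sbR R P.t P.I0 P.p P.F P.hp P.hp0 P.hF i = Ideal.span {P.gS i} := by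
  rw [I0sbR, I0sb, P.ker_pi_span 0, Ideal.map_span, Set.image_singleton, P.tsbChain_gS]

lemma tor_of_ann (i n : ℕ) (hn : 1 ≤ n) (x : ↥(tilt R P.t P.I0 P.F i))
    (hx : x * P.gS i ^ n = 0) :
    ∃ ε, ε ∈ Itor (I0R R P.t P.I0 i) (R i) ∧ P.compHom i 0 x = P.q i ε := by
  have hcomp : ∀ k, P.compHom i k x * P.fseq (i + k) ^ (P.p ^ i * n) = 0 := by
    intro k
    have h1 := congrArg (P.compHom i k) hx
    rw [map_mul, map_pow, map_zero, P.gS_compT, ← pow_mul] at h1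
    exact h1
  have key : ∀ m, (∃ ε, ε ∈ Itor (I0R R P.t P.I0 (i + m)) (R (i + m)) ∧
      P.compHom i m x = P.q (i + m) ε) →
      ∃ ε, ε ∈ Itor (I0R R P.t P.I0 i) (R i) ∧ P.compHom i 0 x = P.q i ε := by
    intro m
    induction m with
    | zero => exact fun h => h
    | succ m ih =>
        rintro ⟨ε, hεt, hεe⟩
        apply ih
        refine ⟨(P.Ftor (i + m) ⟨ε, hεt⟩ : R (i + m)), (P.Ftor (i + m) ⟨ε, hεt⟩).2, ?_⟩
        rw [← P.compHom_coh i m x, P.Ftor_comp (i + m) ε hεt]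
        exact congrArg (P.F (i + m)) hεe
  obtain ⟨m', rfl⟩ : ∃ m', n = m' + 1 := ⟨n - 1, by omega⟩
  apply key m'
  have hnle : P.p ^ i * (m' + 1) ≤ P.p ^ (i + m') := by
    calc P.p ^ i * (m' + 1) ≤ P.p ^ i * P.p ^ m' :=
          Nat.mul_le_mul_left _ (le_trans (Nat.succ_le_of_lt (Nat.lt_two_pow_self (n := m')))
            (Nat.pow_le_pow_left P.hp.two_le m'))
      _ = P.p ^ (i + m') := (pow_add _ _ _).symm
  have hze : P.compHom i (m' + 1) x * P.fseq (i + (m' + 1)) ^ P.p ^ (i + m') = 0 := by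
    have hsp : P.fseq (i + (m' + 1)) ^ P.p ^ (i + m')
        = P.fseq (i + (m' + 1)) ^ (P.p ^ i * (m' + 1))
          * P.fseq (i + (m' + 1)) ^ (P.p ^ (i + m') - P.p ^ i * (m' + 1)) := by
      rw [← pow_add, Nat.add_sub_cancel' hnle]
    rw [hsp, ← mul_assoc, hcomp (m' + 1), zero_mul]
  obtain ⟨A, hA⟩ : ∃ A : R (i + m' + 1) ⧸ I0R R P.t P.I0 (i + m' + 1),
      A = P.compHom i (m' + 1) x := ⟨_, rfl⟩
  have hze2 : A * P.q (i + m' + 1) (P.ee (i + m')) = 0 := by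
    rw [← P.fseq_pow_e (i + m'), hA]
    exact hze
  obtain ⟨ε, hεt, hεe⟩ := P.ann_e_F (i + m') _ hze2
  rw [hA] at hεe
  refine ⟨ε, hεt, ?_⟩
  rw [← P.compHom_coh i m' x]
  exact hεe

lemma tor_lift (i : ℕ) (ε : R i) (hε : ε ∈ Itor (I0R R P.t P.I0 i) (R i)) :
    ∃ x : ↥(tilt R P.t P.I0 P.F i),
      P.compHom i 0 x = P.q i ε ∧ x * P.gS i = 0 := by
  obtain ⟨s, hs0, hsF⟩ := P.tor_chain i ⟨ε, hε⟩
  have hc : ∀ k, P.F (i + k) (P.q (i + (k + 1)) ((s (k + 1) : R (i + (k + 1)))))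
      = P.q (i + k) ((s k : R (i + k))) := by
    intro k
    have h3 : P.q (i + k) ((P.Ftor (i + k) (s (k + 1)) : R (i + k)))
        = P.F (i + k) (P.q (i + (k + 1)) ((s (k + 1) : R (i + (k + 1))))) :=
      P.Ftor_comp' (i + k) (s (k + 1))
    rw [← h3, hsF k]
  refine ⟨P.liftSeq i (fun k => P.q (i + k) ((s k : R (i + k)))) hc, ?_, ?_⟩
  · rw [P.liftSeq_compT, hs0]
    rfl
  · apply P.tilt_ext
    intro k
    rw [map_mul, P.liftSeq_compT, P.gS_compT, map_zero]
    exact P.tor_fseq_pow (i + k) (P.p ^ i) (Nat.one_le_pow i P.p P.hp.pos) _ (s k).2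



end Pkg

section GrHelp

variable {A' : Type*} [CommRing A']

lemma grMk_add' (I : Ideal A') (n : ℕ) {x y : A'} (hx : x ∈ I ^ n) (hy : y ∈ I ^ n) :
    grMk I n (x + y) (Ideal.add_mem _ hx hy) = grMk I n x hx + grMk I n y hy := by
  rw [grMk, grMk, grMk, ← Submodule.Quotient.mk_add]
  exact congrArg Submodule.Quotient.mk (Subtype.ext rfl)

lemma grMk_eq_zero_iff (I : Ideal A') (n : ℕ) {x : A'} (hx : x ∈ I ^ n) :
    grMk I n x hx = 0 ↔ x ∈ I ^ (n + 1) := by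
  rw [grMk, Submodule.Quotient.mk_eq_zero]
  exact Iff.rfl

lemma pow_cast_mem (I : Ideal A') {r s : ℕ} (h : r = s) {v : A'} (hv : v ∈ I ^ r) :
    v ∈ I ^ s := h ▸ hv

end GrHelp

namespace Pkg

variable (P : Pkg R)

lemma ann_f0 (i n : ℕ) (hn : 1 ≤ n) (u : R i) :
    u * P.f0R i ^ n ∈ Ideal.span {P.f0R i ^ (n + 1)} ↔
      ∃ ε, ε ∈ Itor (I0R R P.t P.I0 i) (R i) ∧ P.q i u = P.q i ε := by
  constructor
  · intro h
    obtain ⟨c, hc⟩ := Ideal.mem_span_singleton'.mp h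
    refine ⟨u - c * P.f0R i, ?_, ?_⟩
    · rw [P.mem_tor_iff]
      exact ⟨n, by linear_combination -hc⟩
    · rw [Ideal.Quotient.eq]
      have h2 : u - (u - c * P.f0R i) = c * P.f0R i := by ring
      rw [h2]
      exact Ideal.mul_mem_left _ _ (P.f0R_mem i)
  · rintro ⟨ε, hεt, hεe⟩
    have hsub : u - ε ∈ I0R R P.t P.I0 i := Ideal.Quotient.eq.mp hεe
    rw [P.I0R_span] at hsub
    obtain ⟨r, hr⟩ := Ideal.mem_span_singleton'.mp hsub
    have hε0 : P.f0R i * ε = 0 := P.tor_f0 i hεt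
    refine Ideal.mem_span_singleton'.mpr ⟨r, ?_⟩
    obtain ⟨n', rfl⟩ : ∃ n', n = n' + 1 := ⟨n - 1, by omega⟩
    have h3 : u * P.f0R i ^ (n' + 1)
        = r * P.f0R i ^ (n' + 1 + 1) + P.f0R i * ε * P.f0R i ^ n' := by
      linear_combination (-(P.f0R i ^ (n' + 1))) * hr
    rw [hε0, zero_mul, add_zero] at h3
    exact h3.symm

lemma key_iff (i n : ℕ) (a : ↥(tilt R P.t P.I0 P.F i)) (u : R i)
    (hu : P.q i u = P.compHom i 0 a) :
    a * P.gS i ^ n ∈ Ideal.span {P.gS i ^ (n + 1)} ↔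
      u * P.f0R i ^ n ∈ Ideal.span {P.f0R i ^ (n + 1)} := by
  rcases Nat.eq_zero_or_pos n with rfl | hn
  · simp only [pow_zero, mul_one, zero_add, pow_one]
    have h1 : a ∈ Ideal.span {P.gS i} ↔ P.compHom i 0 a = 0 := by
      constructor
      · intro h
        obtain ⟨c, hc⟩ := Ideal.mem_span_singleton'.mp h
        rw [← hc, map_mul, P.gS_pi_zero, mul_zero]
      · intro h
        obtain ⟨b, hb⟩ := P.ker_pi i a h
        exact Ideal.mem_span_singleton'.mpr ⟨b, hb⟩
    rw [h1, ← hu, ← P.I0R_span i]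
    exact Ideal.Quotient.eq_zero_iff_mem
  · constructor
    · intro h
      obtain ⟨c, hc⟩ := Ideal.mem_span_singleton'.mp h
      have hann : (a - c * P.gS i) * P.gS i ^ n = 0 := by
        rw [sub_mul, sub_eq_zero, ← hc]
        ring
      obtain ⟨ε, hεt, hεe⟩ := P.tor_of_ann i n hn _ hann
      rw [map_sub, map_mul, P.gS_pi_zero, mul_zero, sub_zero] at hεe
      rw [P.ann_f0 i n hn u]
      exact ⟨ε, hεt, hu.trans hεe⟩
    · intro h
      rw [P.ann_f0 i n hn u] at h
      obtain ⟨ε, hεt, hεe⟩ := h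
      obtain ⟨x, hx0, hxg⟩ := P.tor_lift i ε hεt
      have hker : P.compHom i 0 (a - x) = 0 := by
        rw [map_sub, hx0, ← hu, hεe, sub_self]
      obtain ⟨b, hb⟩ := P.ker_pi i _ hker
      have ha : a = x + b * P.gS i := by linear_combination -hb
      obtain ⟨n', rfl⟩ : ∃ n', n = n' + 1 := ⟨n - 1, by omega⟩
      refine Ideal.mem_span_singleton'.mpr ⟨b, ?_⟩
      have h4 : a * P.gS i ^ (n' + 1)
          = b * P.gS i ^ (n' + 1 + 1) + x * P.gS i * P.gS i ^ n' := by
        rw [ha]; ring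
      rw [hxg, zero_mul, add_zero] at h4
      exact h4.symm

/-- a choice of lift along the quotient projection. -/
noncomputable def lif (i : ℕ) (y : R i ⧸ I0R R P.t P.I0 i) : R i :=
  Classical.choose (Ideal.Quotient.mk_surjective y)

lemma lif_spec (i : ℕ) (y : R i ⧸ I0R R P.t P.I0 i) : P.q i (P.lif i y) = y :=
  Classical.choose_spec (Ideal.Quotient.mk_surjective y)

lemma f0R_pow_mem (i n : ℕ) : P.f0R i ^ n ∈ I0R R P.t P.I0 i ^ n :=
  Ideal.pow_mem_pow (P.f0R_mem i) n

lemma mul_f0R_pow_mem (i n : ℕ) (u : R i) : u * P.f0R i ^ n ∈ I0R R P.t P.I0 i ^ n :=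
  Ideal.mul_mem_left _ _ (P.f0R_pow_mem i n)

lemma mem_I_pow_iff (i n : ℕ) (v : R i) :
    v ∈ I0R R P.t P.I0 i ^ n ↔ v ∈ Ideal.span {P.f0R i ^ n} := by
  rw [P.I0R_span i, Ideal.span_singleton_pow]

lemma mem_IS_pow_iff (i n : ℕ) (x : ↥(tilt R P.t P.I0 P.F i)) :
    x ∈ I0sbR R P.t P.I0 P.p P.F P.hp P.hp0 P.hF i ^ n ↔ x ∈ Ideal.span {P.gS i ^ n} := by
  rw [P.I0sbR_span i, Ideal.span_singleton_pow]

/-- the additive map `Rᵢ^{s♭} → grⁿ(Rᵢ)`. -/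
noncomputable def Hf (i n : ℕ) (a : ↥(tilt R P.t P.I0 P.F i)) :
    GrPiece (I0R R P.t P.I0 i) n :=
  grMk _ n (P.lif i (P.compHom i 0 a) * P.f0R i ^ n) (P.mul_f0R_pow_mem i n _)

lemma Hf_congr (i n : ℕ) (u : R i) (a : ↥(tilt R P.t P.I0 P.F i))
    (h : P.q i u = P.compHom i 0 a)
    (hm : u * P.f0R i ^ n ∈ I0R R P.t P.I0 i ^ n) :
    grMk _ n (u * P.f0R i ^ n) hm = P.Hf i n a := by
  rw [Hf, grMk_eq_iff]
  have hd : u - P.lif i (P.compHom i 0 a) ∈ I0R R P.t P.I0 i :=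
    Ideal.Quotient.eq.mp (h.trans (P.lif_spec i _).symm)
  have h2 : u * P.f0R i ^ n - P.lif i (P.compHom i 0 a) * P.f0R i ^ n
      = (u - P.lif i (P.compHom i 0 a)) * P.f0R i ^ n := by ring
  rw [h2]
  exact pow_cast_mem _ (by omega) (mul_mem_pow_add (mem_pow_one hd) (P.f0R_pow_mem i n))

lemma Hf_ker (i n : ℕ) (a b : ↥(tilt R P.t P.I0 P.F i))
    (h : (a - b) * P.gS i ^ n ∈ Ideal.span {P.gS i ^ (n + 1)}) :
    P.Hf i n a = P.Hf i n b := by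
  have hu : P.q i (P.lif i (P.compHom i 0 (a - b))) = P.compHom i 0 (a - b) := P.lif_spec i _
  have h2 : P.lif i (P.compHom i 0 (a - b)) * P.f0R i ^ n ∈ Ideal.span {P.f0R i ^ (n + 1)} :=
    (P.key_iff i n (a - b) _ hu).mp h
  rw [Hf, Hf, grMk_eq_iff]
  have hd : P.lif i (P.compHom i 0 a) - P.lif i (P.compHom i 0 b)
      - P.lif i (P.compHom i 0 (a - b)) ∈ I0R R P.t P.I0 i := by
    have h3 : P.q i (P.lif i (P.compHom i 0 a) - P.lif i (P.compHom i 0 b)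
        - P.lif i (P.compHom i 0 (a - b))) = 0 := by
      rw [map_sub, map_sub, P.lif_spec, P.lif_spec, hu, map_sub]
      exact sub_self _
    exact Ideal.Quotient.eq_zero_iff_mem.mp h3
  have hsplit : P.lif i (P.compHom i 0 a) * P.f0R i ^ n
        - P.lif i (P.compHom i 0 b) * P.f0R i ^ n
      = P.lif i (P.compHom i 0 (a - b)) * P.f0R i ^ n
        + (P.lif i (P.compHom i 0 a) - P.lif i (P.compHom i 0 b)
          - P.lif i (P.compHom i 0 (a - b))) * P.f0R i ^ n := by
    ring
  rw [hsplit]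
  apply Ideal.add_mem
  · exact (P.mem_I_pow_iff i (n + 1) _).mpr h2
  · exact pow_cast_mem _ (by omega) (mul_mem_pow_add (mem_pow_one hd) (P.f0R_pow_mem i n))

lemma Hf_add (i n : ℕ) (a b : ↥(tilt R P.t P.I0 P.F i)) :
    P.Hf i n (a + b) = P.Hf i n a + P.Hf i n b := by
  have h : P.q i (P.lif i (P.compHom i 0 a) + P.lif i (P.compHom i 0 b))
      = P.compHom i 0 (a + b) := by
    rw [map_add, map_add, P.lif_spec, P.lif_spec]
  rw [← P.Hf_congr i n _ (a + b) h (P.mul_f0R_pow_mem i n _), Hf, Hf, ← grMk_add', grMk_eq_iff]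
  have h0 : (P.lif i (P.compHom i 0 a) + P.lif i (P.compHom i 0 b)) * P.f0R i ^ n
      - (P.lif i (P.compHom i 0 a) * P.f0R i ^ n + P.lif i (P.compHom i 0 b) * P.f0R i ^ n)
      = 0 := by ring
  rw [h0]
  exact Submodule.zero_mem _

/-- a division witness: an element `a` with `a * gSⁿ = x`. -/
noncomputable def chdiv (i n : ℕ)
    (x : ↥((I0sbR R P.t P.I0 P.p P.F P.hp P.hp0 P.hF i ^ n : Ideal ↥(tilt R P.t P.I0 P.F i)))) :
    ↥(tilt R P.t P.I0 P.F i) :=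
  Classical.choose (Ideal.mem_span_singleton'.mp
    ((P.mem_IS_pow_iff i n (x : ↥(tilt R P.t P.I0 P.F i))).mp x.2))

lemma chdiv_spec (i n : ℕ)
    (x : ↥((I0sbR R P.t P.I0 P.p P.F P.hp P.hp0 P.hF i ^ n : Ideal ↥(tilt R P.t P.I0 P.F i)))) :
    P.chdiv i n x * P.gS i ^ n = (x : ↥(tilt R P.t P.I0 P.F i)) :=
  Classical.choose_spec (Ideal.mem_span_singleton'.mp
    ((P.mem_IS_pow_iff i n (x : ↥(tilt R P.t P.I0 P.F i))).mp x.2))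

/-- the underlying function of the graded map. -/
noncomputable def gfun (i n : ℕ) :
    GrPiece (I0sbR R P.t P.I0 P.p P.F P.hp P.hp0 P.hF i) n → GrPiece (I0R R P.t P.I0 i) n := by
  refine Quotient.lift (fun x => P.Hf i n (P.chdiv i n x)) ?_
  intro x y hxy
  have hxy0 : x - y ∈ Submodule.comap
      ((I0sbR R P.t P.I0 P.p P.F P.hp P.hp0 P.hF i ^ n : Ideal ↥(tilt R P.t P.I0 P.F i))).subtype
      ((I0sbR R P.t P.I0 P.p P.F P.hp P.hp0 P.hF i ^ (n + 1) : Ideal ↥(tilt R P.t P.I0 P.F i))) :=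
    Submodule.quotientRel_def _ |>.mp hxy
  have hxy' : (x : ↥(tilt R P.t P.I0 P.F i)) - (y : ↥(tilt R P.t P.I0 P.F i))
      ∈ I0sbR R P.t P.I0 P.p P.F P.hp P.hp0 P.hF i ^ (n + 1) := hxy0
  apply P.Hf_ker
  have h5 : (P.chdiv i n x - P.chdiv i n y) * P.gS i ^ n
      = (x : ↥(tilt R P.t P.I0 P.F i)) - (y : ↥(tilt R P.t P.I0 P.F i)) := by
    rw [sub_mul, P.chdiv_spec, P.chdiv_spec]
  rw [h5]
  exact (P.mem_IS_pow_iff i (n + 1) _).mp hxy'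

lemma gfun_mk (i n : ℕ)
    (x : ↥((I0sbR R P.t P.I0 P.p P.F P.hp P.hp0 P.hF i ^ n : Ideal ↥(tilt R P.t P.I0 P.F i)))) :
    P.gfun i n (Submodule.Quotient.mk x) = P.Hf i n (P.chdiv i n x) := rfl

/-- the graded map in degree `n`, as an additive map. -/
noncomputable def gmap (i n : ℕ) :
    GrPiece (I0sbR R P.t P.I0 P.p P.F P.hp P.hp0 P.hF i) n →+ GrPiece (I0R R P.t P.I0 i) n where
  toFun := P.gfun i n
  map_zero' := by
    have e1 : (0 : GrPiece (I0sbR R P.t P.I0 P.p P.F P.hp P.hp0 P.hF i) n)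
        = Submodule.Quotient.mk 0 := (Submodule.Quotient.mk_zero _).symm
    rw [e1, P.gfun_mk]
    have e2 : P.Hf i n (P.chdiv i n 0) = P.Hf i n 0 := by
      apply P.Hf_ker
      have h5 : (P.chdiv i n 0 - 0) * P.gS i ^ n = 0 := by
        rw [sub_mul, P.chdiv_spec, zero_mul]
        exact sub_self _
      rw [h5]
      exact Submodule.zero_mem _
    rw [e2]
    have h : P.q i (0 : R i) = P.compHom i 0 (0 : ↥(tilt R P.t P.I0 P.F i)) := by
      rw [map_zero, map_zero]
    rw [← P.Hf_congr i n 0 0 h (P.mul_f0R_pow_mem i n 0)]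
    rw [grMk_eq_zero_iff]
    have h0 : (0 : R i) * P.f0R i ^ n = 0 := zero_mul _
    rw [h0]
    exact Submodule.zero_mem _
  map_add' := by
    intro ξ η
    induction ξ using Quotient.ind
    induction η using Quotient.ind
    rename_i x y
    show P.gfun i n (Submodule.Quotient.mk x + Submodule.Quotient.mk y)
        = P.gfun i n (Submodule.Quotient.mk x) + P.gfun i n (Submodule.Quotient.mk y)
    rw [← Submodule.Quotient.mk_add, P.gfun_mk, P.gfun_mk, P.gfun_mk]
    have e4 : P.Hf i n (P.chdiv i n (x + y)) = P.Hf i n (P.chdiv i n x + P.chdiv i n y) := by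
      apply P.Hf_ker
      have h5 : (P.chdiv i n (x + y) - (P.chdiv i n x + P.chdiv i n y)) * P.gS i ^ n = 0 := by
        rw [sub_mul, add_mul, P.chdiv_spec, P.chdiv_spec, P.chdiv_spec, Submodule.coe_add]
        exact sub_self _
      rw [h5]
      exact Submodule.zero_mem _
    rw [e4]
    exact P.Hf_add i n _ _

lemma gmap_bij (i n : ℕ) : Function.Bijective (P.gmap i n) := by
  constructor
  · rw [injective_iff_map_eq_zero]
    intro ξ hξ
    induction ξ using Quotient.ind
    rename_i x
    have h1 : P.Hf i n (P.chdiv i n x) = 0 := hξ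
    have h2 : P.lif i (P.compHom i 0 (P.chdiv i n x)) * P.f0R i ^ n
        ∈ I0R R P.t P.I0 i ^ (n + 1) := (grMk_eq_zero_iff _ n _).mp h1
    have h3 : P.lif i (P.compHom i 0 (P.chdiv i n x)) * P.f0R i ^ n
        ∈ Ideal.span {P.f0R i ^ (n + 1)} := (P.mem_I_pow_iff i (n + 1) _).mp h2
    have h4 : P.chdiv i n x * P.gS i ^ n ∈ Ideal.span {P.gS i ^ (n + 1)} :=
      (P.key_iff i n (P.chdiv i n x) _ (P.lif_spec i _)).mpr h3
    apply (Submodule.Quotient.mk_eq_zero _).mpr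
    show (x : ↥(tilt R P.t P.I0 P.F i)) ∈ I0sbR R P.t P.I0 P.p P.F P.hp P.hp0 P.hF i ^ (n + 1)
    apply (P.mem_IS_pow_iff i (n + 1) _).mpr
    rw [← P.chdiv_spec i n x]
    exact h4
  · intro η
    induction η using Quotient.ind
    rename_i v
    have hv : (v : R i) ∈ Ideal.span {P.f0R i ^ n} := (P.mem_I_pow_iff i n _).mp v.2
    obtain ⟨u, hu⟩ := Ideal.mem_span_singleton'.mp hv
    obtain ⟨a, ha⟩ := P.pi_surj i (P.q i u)
    have hxmem : a * P.gS i ^ n ∈ I0sbR R P.t P.I0 P.p P.F P.hp P.hp0 P.hF i ^ n :=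
      (P.mem_IS_pow_iff i n _).mpr (Ideal.mem_span_singleton'.mpr ⟨a, rfl⟩)
    refine ⟨Submodule.Quotient.mk ⟨a * P.gS i ^ n, hxmem⟩, ?_⟩
    have e1 : P.gmap i n (Submodule.Quotient.mk ⟨a * P.gS i ^ n, hxmem⟩)
        = P.Hf i n (P.chdiv i n ⟨a * P.gS i ^ n, hxmem⟩) := rfl
    have e2 : P.Hf i n (P.chdiv i n ⟨a * P.gS i ^ n, hxmem⟩) = P.Hf i n a := by
      apply P.Hf_ker
      have h5 : (P.chdiv i n ⟨a * P.gS i ^ n, hxmem⟩ - a) * P.gS i ^ n = 0 := by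
        rw [sub_mul, P.chdiv_spec]
        exact sub_self _
      rw [h5]
      exact Submodule.zero_mem _
    have hq : P.q i u = P.compHom i 0 a := ha.symm
    have e3 : P.Hf i n a = grMk (I0R R P.t P.I0 i) n (u * P.f0R i ^ n)
        (P.mul_f0R_pow_mem i n u) := (P.Hf_congr i n u a hq _).symm
    have e4 : grMk (I0R R P.t P.I0 i) n (u * P.f0R i ^ n) (P.mul_f0R_pow_mem i n u)
        = Submodule.Quotient.mk v := by
      have e5 : (Submodule.Quotient.mk v : GrPiece (I0R R P.t P.I0 i) n)
          = grMk (I0R R P.t P.I0 i) n (v : R i) v.2 := rfl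
      rw [e5, grMk_eq_iff, hu]
      have h0 : (v : R i) - (v : R i) = 0 := sub_self _
      rw [h0]
      exact Submodule.zero_mem _
    exact e1.trans (e2.trans (e3.trans e4))

lemma gmap_mul (i : ℕ) :
    GradedMul (I0sbR R P.t P.I0 P.p P.F P.hp P.hp0 P.hF i) (I0R R P.t P.I0 i)
      (fun n => P.gmap i n) := by
  intro m n x y hx hy u v hu hv h1 h2
  have ha : P.chdiv i m ⟨x, hx⟩ * P.gS i ^ m = x := P.chdiv_spec i m ⟨x, hx⟩
  have hb : P.chdiv i n ⟨y, hy⟩ * P.gS i ^ n = y := P.chdiv_spec i n ⟨y, hy⟩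
  set a := P.chdiv i m ⟨x, hx⟩ with hadef
  set b := P.chdiv i n ⟨y, hy⟩ with hbdef
  have h1' : P.Hf i m a = grMk (I0R R P.t P.I0 i) m u hu := h1
  have h2' : P.Hf i n b = grMk (I0R R P.t P.I0 i) n v hv := h2
  have hα : P.lif i (P.compHom i 0 a) * P.f0R i ^ m - u ∈ I0R R P.t P.I0 i ^ (m + 1) :=
    (grMk_eq_iff (I0R R P.t P.I0 i) m (P.mul_f0R_pow_mem i m _) hu).mp h1'
  have hβ : P.lif i (P.compHom i 0 b) * P.f0R i ^ n - v ∈ I0R R P.t P.I0 i ^ (n + 1) :=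
    (grMk_eq_iff (I0R R P.t P.I0 i) n (P.mul_f0R_pow_mem i n _) hv).mp h2'
  have egoal : P.gmap i (m + n) (grMk _ (m + n) (x * y) (mul_mem_pow_add hx hy))
      = P.Hf i (m + n) (P.chdiv i (m + n) ⟨x * y, mul_mem_pow_add hx hy⟩) := rfl
  rw [egoal]
  have e2 : P.Hf i (m + n) (P.chdiv i (m + n) ⟨x * y, mul_mem_pow_add hx hy⟩)
      = P.Hf i (m + n) (a * b) := by
    apply P.Hf_ker
    have h5 : (P.chdiv i (m + n) ⟨x * y, mul_mem_pow_add hx hy⟩ - a * b) * P.gS i ^ (m + n)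
        = 0 := by
      rw [sub_mul, P.chdiv_spec]
      have h6 : a * b * P.gS i ^ (m + n) = x * y := by
        rw [pow_add, ← ha, ← hb]
        ring
      rw [h6]
      exact sub_self _
    rw [h5]
    exact Submodule.zero_mem _
  rw [e2, Hf, grMk_eq_iff]
  have h4 : P.lif i (P.compHom i 0 (a * b))
      - P.lif i (P.compHom i 0 a) * P.lif i (P.compHom i 0 b) ∈ I0R R P.t P.I0 i := by
    apply Ideal.Quotient.eq.mp
    have e7 : P.q i (P.lif i (P.compHom i 0 (a * b))) = P.compHom i 0 (a * b) := P.lif_spec i _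
    have e8 : P.q i (P.lif i (P.compHom i 0 a)) = P.compHom i 0 a := P.lif_spec i _
    have e9 : P.q i (P.lif i (P.compHom i 0 b)) = P.compHom i 0 b := P.lif_spec i _
    have e10 : P.compHom i 0 (a * b) = P.compHom i 0 a * P.compHom i 0 b := map_mul _ _ _
    have e11 : P.q i (P.lif i (P.compHom i 0 a) * P.lif i (P.compHom i 0 b))
        = P.compHom i 0 a * P.compHom i 0 b := by rw [map_mul, e8, e9]
    rw [e7, e10, ← e11]
  have hmain : P.lif i (P.compHom i 0 (a * b)) * P.f0R i ^ (m + n) - u * v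
      = (P.lif i (P.compHom i 0 (a * b))
          - P.lif i (P.compHom i 0 a) * P.lif i (P.compHom i 0 b)) * P.f0R i ^ (m + n)
        + ((P.lif i (P.compHom i 0 a) * P.f0R i ^ m - u)
            * (P.lif i (P.compHom i 0 b) * P.f0R i ^ n)
          + u * (P.lif i (P.compHom i 0 b) * P.f0R i ^ n - v)) := by
    rw [pow_add]
    ring
  rw [hmain]
  apply Ideal.add_mem
  · exact pow_cast_mem _ (by omega)
      (mul_mem_pow_add (mem_pow_one h4) (P.f0R_pow_mem i (m + n)))
  · apply Ideal.add_mem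
    · exact pow_cast_mem _ (by omega)
        (mul_mem_pow_add hα (P.mul_f0R_pow_mem i n _))
    · exact pow_cast_mem _ (by omega) (mul_mem_pow_add hu hβ)

lemma gmap_deg0 (i : ℕ) (x : ↥(tilt R P.t P.I0 P.F i)) (u : R i)
    (h : P.q i u = tiltProj R P.t P.I0 P.F i x) :
    P.gmap i 0 (grMk (I0sbR R P.t P.I0 P.p P.F P.hp P.hp0 P.hF i) 0 x (mem_pow_zero _ x))
      = grMk (I0R R P.t P.I0 i) 0 u (mem_pow_zero _ u) := by
  have e1 : P.gmap i 0 (grMk (I0sbR R P.t P.I0 P.p P.F P.hp P.hp0 P.hF i) 0 x (mem_pow_zero _ x))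
      = P.Hf i 0 (P.chdiv i 0 ⟨x, mem_pow_zero _ x⟩) := rfl
  rw [e1]
  have hc : P.chdiv i 0 ⟨x, mem_pow_zero _ x⟩ * P.gS i ^ 0
      = (⟨x, mem_pow_zero _ x⟩ : ↥((I0sbR R P.t P.I0 P.p P.F P.hp P.hp0 P.hF i ^ 0
          : Ideal ↥(tilt R P.t P.I0 P.F i)))) := P.chdiv_spec i 0 _
  have hc2 : P.chdiv i 0 ⟨x, mem_pow_zero _ x⟩ = x := by
    set c := P.chdiv i 0 ⟨x, mem_pow_zero _ x⟩ with hcdef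
    have hc' : c * P.gS i ^ 0 = x := hc
    rw [pow_zero, mul_one] at hc'
    exact hc'
  have e2 : P.Hf i 0 (P.chdiv i 0 ⟨x, mem_pow_zero _ x⟩) = P.Hf i 0 x := by rw [hc2]
  have hq : P.q i u = P.compHom i 0 x := h
  rw [e2, ← P.Hf_congr i 0 u x hq (P.mul_f0R_pow_mem i 0 u), grMk_eq_iff]
  have h0 : u * P.f0R i ^ 0 - u = 0 := by rw [pow_zero, mul_one]; exact sub_self _
  rw [h0]
  exact Submodule.zero_mem _

lemma main (i : ℕ) :
    ∃ g : ∀ n, GrPiece (I0sbR R P.t P.I0 P.p P.F P.hp P.hp0 P.hF i) n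
        →+ GrPiece (I0R R P.t P.I0 i) n,
      (∀ n, Function.Bijective (g n)) ∧
      GradedMul (I0sbR R P.t P.I0 P.p P.F P.hp P.hp0 P.hF i) (I0R R P.t P.I0 i) g ∧
      ∀ (x : ↥(tilt R P.t P.I0 P.F i)) (u : R i),
        Ideal.Quotient.mk (I0R R P.t P.I0 i) u = tiltProj R P.t P.I0 P.F i x →
        g 0 (grMk (I0sbR R P.t P.I0 P.p P.F P.hp P.hp0 P.hF i) 0 x (mem_pow_zero _ x)) =
          grMk (I0R R P.t P.I0 i) 0 u (mem_pow_zero _ u) :=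
  ⟨fun n => P.gmap i n, fun n => P.gmap_bij i n, P.gmap_mul i, P.gmap_deg0 i⟩



end Pkg

end Aux


universe u

set_option maxHeartbeats 1000000 in
/-- **Proposition 3.6.** For a preperfectoid tower, the canonical isomorphism
`Rᵢ^{s♭}/I₀^{s♭}Rᵢ^{s♭} ≅ Rᵢ/I₀Rᵢ` induced by the `0`-th projection extends to an
isomorphism of graded rings `gr_{I₀^{s♭}}(Rᵢ^{s♭}) ≅ gr_{I₀}(Rᵢ)`. -/
theorem stmt12
    (p : ℕ) (hp : p.Prime)
    {R : ℕ → Type u} [∀ i, CommRing (R i)] (t : ∀ i, R i →+* R (i + 1))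
    (I0 : Ideal (R 0))
    (hp0 : (p : R 0) ∈ I0)
    (hb : ∀ i, Function.Injective (tbar R t I0 i))
    (F : ∀ i, R (i + 1) ⧸ I0R R t I0 (i + 1) →+* R i ⧸ I0R R t I0 i)
    (hF : ∀ i x, tbar R t I0 i (F i x) = x ^ p)
    (hd : ∀ i, Function.Surjective (F i))
    (hI0 : I0.IsPrincipal)
    (I1 : Ideal (R 1)) (hI1 : I1.IsPrincipal)
    (hI1p : I1 ^ p = I0R R t I0 1)
    (hker : ∀ i, RingHom.ker (F i) =
      I1.map ((Ideal.Quotient.mk (I0R R t I0 (i + 1))).comp (chain1 R t i)))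
    (hg : ∀ i, CondG R t I0 F i) :
    ∀ i, ∃ g : ∀ n, GrPiece (I0sbR R t I0 p F hp hp0 hF i) n →+ GrPiece (I0R R t I0 i) n,
      (∀ n, Function.Bijective (g n)) ∧
      GradedMul (I0sbR R t I0 p F hp hp0 hF i) (I0R R t I0 i) g ∧
      ∀ (x : ↥(tilt R t I0 F i)) (u : R i),
        Ideal.Quotient.mk (I0R R t I0 i) u = tiltProj R t I0 F i x →
        g 0 (grMk (I0sbR R t I0 p F hp hp0 hF i) 0 x (mem_pow_zero _ x)) =
          grMk (I0R R t I0 i) 0 u (mem_pow_zero _ u) := by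
  obtain ⟨f0, hf0⟩ := hI0.principal
  obtain ⟨f1, hf1⟩ := hI1.principal
  have hf0' : I0 = Ideal.span {f0} := hf0
  have hf1' : I1 = Ideal.span {f1} := hf1
  intro i
  exact Pkg.main (R := R)
    { t := t, I0 := I0, p := p, hp := hp, hp0 := hp0, F := F, hb := hb, hF := hF, hd := hd,
      f0 := f0, hf0 := hf0', f1 := f1, h1p := by rw [← hf1']; exact hI1p,
      hker := fun j => by rw [← hf1']; exact hker j, hg := hg } i
end Preamble
end
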